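/- arXiv:1109.1902 — 6 statements merged into one kernel-verified Lean document; each statement's English description precedes it below -/
import Mathlib

section
/- Let k ≥ 2 and m ≥ 1 be integers, and let δ > 0 satisfy δ·(k + k² + Σ_{j=2}^{k} C(k,j)·δ^{j−2}·(1 + kδ)) ≤ 1/2, where C(k,j) = k!/(j!(k−j)!). If A, B ∈ M_m(ℝ) satisfy ‖A‖ < δ and ‖B‖ < δ in the operator norm, and (k⁻¹·I + A)(I + B) = (I + B)^k (k⁻¹·I + A), then B = 0. -/
set_option maxHeartbeats 1000000

/-- linear-algebraic core of Lemma 2.2 of the paper.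
Operators on Euclidean space `ℝ^m` (equivalently, `m × m` real matrices with the
operator norm coming from the Euclidean norm). If `‖A‖ < δ`, `‖B‖ < δ`, where
`δ·(k + k² + Σ_{j=2}^{k} C(k,j)·δ^{j−2}·(1 + kδ)) ≤ 1/2`, and
`(k⁻¹·I + A)(I + B) = (I + B)^k (k⁻¹·I + A)`, then `B = 0`. -/
theorem stmt0 (k m : ℕ) (hk : 2 ≤ k) (hm : 1 ≤ m) (δ : ℝ) (hδ : 0 < δ)
    (hδ2 : δ * ((k : ℝ) + (k : ℝ) ^ 2 +
        ∑ j ∈ Finset.Icc 2 k, (k.choose j : ℝ) * δ ^ (j - 2) * (1 + (k : ℝ) * δ)) ≤ 1 / 2)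
    (A B : EuclideanSpace ℝ (Fin m) →L[ℝ] EuclideanSpace ℝ (Fin m))
    (hA : ‖A‖ < δ) (hB : ‖B‖ < δ)
    (h : ((k : ℝ)⁻¹ • (1 : EuclideanSpace ℝ (Fin m) →L[ℝ] EuclideanSpace ℝ (Fin m)) + A)
          * (1 + B) = (1 + B) ^ k * ((k : ℝ)⁻¹ • 1 + A)) :
    B = 0 := by
  have hk0 : (k : ℝ) ≠ 0 := by positivity
  have hK2 : (2 : ℝ) ≤ (k : ℝ) := by exact_mod_cast hk
  have hsm : ∀ (c : ℝ) (X Y : EuclideanSpace ℝ (Fin m) →L[ℝ] EuclideanSpace ℝ (Fin m)),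
      (c • X) * Y = c • (X * Y) := fun c X Y => ContinuousLinearMap.smul_comp c X Y
  have hms : ∀ (c : ℝ) (X Y : EuclideanSpace ℝ (Fin m) →L[ℝ] EuclideanSpace ℝ (Fin m)),
      X * (c • Y) = c • (X * Y) := fun c X Y => X.comp_smul c Y
  set R := (1 + B) ^ k - 1 - (k : ℝ) • B with hRdef
  have hbin : (1 + B) ^ k = ∑ j ∈ Finset.range (k + 1), (k.choose j : ℕ) • B ^ j := by
    rw [add_comm, (Commute.one_right B).add_pow]
    refine Finset.sum_congr rfl fun j _ => ?_
    rw [one_pow, mul_one, nsmul_eq_mul, (Nat.cast_commute (k.choose j) (B ^ j)).eq]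
  have hRsum : R = ∑ j ∈ Finset.Icc 2 k, (k.choose j : ℕ) • B ^ j := by
    have hsplit : Finset.range (k + 1) = insert 0 (insert 1 (Finset.Icc 2 k)) := by
      ext j
      simp only [Finset.mem_range, Finset.mem_insert, Finset.mem_Icc]
      omega
    rw [hRdef, hbin, hsplit, Finset.sum_insert, Finset.sum_insert]
    · simp only [pow_zero, pow_one, Nat.choose_zero_right, Nat.choose_one_right, one_smul]
      rw [← Nat.cast_smul_eq_nsmul ℝ k B]
      abel
    · simp
    · simp only [Finset.mem_insert, Finset.mem_Icc]; omega
  -- the key identity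
  have key : B - (k : ℝ)⁻¹ • B = A * B - (k : ℝ)⁻¹ • R - (k : ℝ) • (B * A) - R * A := by
    have hP : (1 + B) ^ k = 1 + (k : ℝ) • B + R := by rw [hRdef]; abel
    rw [hP] at h
    have hck : (k : ℝ)⁻¹ * (k : ℝ) = 1 := inv_mul_cancel₀ hk0
    have hck' : (k : ℝ) * (k : ℝ)⁻¹ = 1 := mul_inv_cancel₀ hk0
    simp only [add_mul, mul_add, hsm, hms, one_mul, mul_one,
      smul_add, smul_smul, hck, hck', one_smul] at h
    linear_combination (norm := abel) -h
  have hB0 : (0 : ℝ) ≤ ‖B‖ := norm_nonneg B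
  have hBd : ‖B‖ ≤ δ := le_of_lt hB
  have hAd : ‖A‖ ≤ δ := le_of_lt hA
  have hA0 : (0 : ℝ) ≤ ‖A‖ := norm_nonneg A
  set T : ℝ := ∑ j ∈ Finset.Icc 2 k, (k.choose j : ℝ) * δ ^ (j - 2) with hTdef
  have hT0 : 0 ≤ T := Finset.sum_nonneg fun j _ => by positivity
  have hRnorm : ‖R‖ ≤ ‖B‖ * δ * T := by
    rw [hRsum]
    calc ‖∑ j ∈ Finset.Icc 2 k, (k.choose j : ℕ) • B ^ j‖
        ≤ ∑ j ∈ Finset.Icc 2 k, ‖(k.choose j : ℕ) • B ^ j‖ := norm_sum_le _ _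
      _ ≤ ∑ j ∈ Finset.Icc 2 k, (k.choose j : ℝ) * δ ^ (j - 2) * (δ * ‖B‖) := by
          refine Finset.sum_le_sum fun j hj => ?_
          have hj2 : 2 ≤ j := (Finset.mem_Icc.mp hj).1
          have hc0 : (0:ℝ) ≤ (k.choose j : ℝ) := Nat.cast_nonneg _
          calc ‖(k.choose j : ℕ) • B ^ j‖ ≤ (k.choose j : ℝ) * ‖B ^ j‖ := norm_nsmul_le
            _ ≤ (k.choose j : ℝ) * ‖B‖ ^ j :=
                mul_le_mul_of_nonneg_left (norm_pow_le' B (lt_of_lt_of_le two_pos hj2)) hc0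
            _ ≤ (k.choose j : ℝ) * δ ^ (j - 2) * (δ * ‖B‖) := by
                rw [mul_assoc]
                refine mul_le_mul_of_nonneg_left ?_ hc0
                calc ‖B‖ ^ j = ‖B‖ ^ (j - 2) * (‖B‖ * ‖B‖) := by
                      rw [← pow_two, ← pow_add]; congr 1; omega
                  _ ≤ δ ^ (j - 2) * (δ * ‖B‖) := by gcongr
      _ = ‖B‖ * δ * T := by rw [hTdef, ← Finset.sum_mul]; ring
  have hkpos : (0 : ℝ) < (k : ℝ) := by positivity
  have hR0 : (0 : ℝ) ≤ ‖R‖ := norm_nonneg R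
  have hkinv0 : (0 : ℝ) ≤ (k : ℝ)⁻¹ := by positivity
  have hmain : (1 - (k : ℝ)⁻¹) * ‖B‖ ≤
      ‖A‖ * ‖B‖ + (k : ℝ)⁻¹ * ‖R‖ + (k : ℝ) * (‖B‖ * ‖A‖) + ‖R‖ * ‖A‖ := by
    have hsub : B - (k : ℝ)⁻¹ • B = (1 - (k : ℝ)⁻¹) • B := by module
    have h1 : ‖B - (k : ℝ)⁻¹ • B‖ = (1 - (k : ℝ)⁻¹) * ‖B‖ := by
      rw [hsub]
      have := norm_smul (1 - (k : ℝ)⁻¹) B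
      rw [Real.norm_eq_abs, abs_of_nonneg] at this
      · exact this
      · have : (k : ℝ)⁻¹ ≤ 1 := by
          rw [inv_le_one_iff₀]; right; linarith
        linarith
    have h2 : ‖(k : ℝ)⁻¹ • R‖ = (k : ℝ)⁻¹ * ‖R‖ := by
      have := norm_smul ((k : ℝ)⁻¹) R
      rwa [Real.norm_eq_abs, abs_of_nonneg hkinv0] at this
    have h3 : ‖(k : ℝ) • (B * A)‖ ≤ (k : ℝ) * (‖B‖ * ‖A‖) := by
      have e := norm_smul ((k : ℝ)) (B * A)
      rw [Real.norm_eq_abs, abs_of_nonneg (le_of_lt hkpos)] at e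
      rw [e]
      exact mul_le_mul_of_nonneg_left (norm_mul_le B A) (le_of_lt hkpos)
    rw [← h1, key]
    calc ‖A * B - (k : ℝ)⁻¹ • R - (k : ℝ) • (B * A) - R * A‖
        ≤ ‖A * B‖ + ‖(k : ℝ)⁻¹ • R‖ + ‖(k : ℝ) • (B * A)‖ + ‖R * A‖ := by
          refine le_trans (norm_sub_le _ _) ?_
          exact add_le_add (le_trans (norm_sub_le _ _)
            (add_le_add (norm_sub_le _ _) le_rfl)) le_rfl
      _ ≤ ‖A‖ * ‖B‖ + (k : ℝ)⁻¹ * ‖R‖ + (k : ℝ) * (‖B‖ * ‖A‖) + ‖R‖ * ‖A‖ := by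
          rw [h2]
          exact add_le_add (add_le_add (add_le_add (norm_mul_le A B) le_rfl) h3)
            (norm_mul_le R A)
  -- final arithmetic
  have hBzero : ‖B‖ ≤ 0 := by
    set K := (k : ℝ)
    set b := ‖B‖
    set a := ‖A‖
    set r := ‖R‖
    have hδ2' : K * δ + δ * K ^ 2 + δ * T + K * δ ^ 2 * T ≤ 1 / 2 := by
      have hs : (∑ j ∈ Finset.Icc 2 k, (k.choose j : ℝ) * δ ^ (j - 2) * (1 + K * δ))
          = T * (1 + K * δ) := by rw [hTdef, Finset.sum_mul]
      rw [hs] at hδ2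
      nlinarith [hδ2]
    have e1 : (K - 1) * b = K * ((1 - K⁻¹) * b) := by field_simp
    have e2 : K * (a * b + K⁻¹ * r + K * (b * a) + r * a)
        = K * (a * b) + r + K ^ 2 * (b * a) + K * (r * a) := by field_simp <;> ring
    have h2 : (K - 1) * b ≤ K * (a * b) + r + K ^ 2 * (b * a) + K * (r * a) := by
      rw [e1, ← e2]
      exact mul_le_mul_of_nonneg_left hmain (le_of_lt hkpos)
    have q1 : K * (a * b) ≤ K * (δ * b) := by gcongr
    have q2 : K ^ 2 * (b * a) ≤ K ^ 2 * (b * δ) := by gcongr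
    have q3 : K * (r * a) ≤ K * ((b * δ * T) * δ) := by
      have : r * a ≤ (b * δ * T) * δ :=
        mul_le_mul hRnorm hAd hA0 (by positivity)
      exact mul_le_mul_of_nonneg_left this (le_of_lt hkpos)
    have hb12 : b * (K * δ + δ * K ^ 2 + δ * T + K * δ ^ 2 * T) ≤ b * (1 / 2) :=
      mul_le_mul_of_nonneg_left hδ2' hB0
    nlinarith [h2, q1, q2, q3, hb12, hRnorm, hB0, hK2]
  exact norm_eq_zero.mp (le_antisymm hBzero hB0)
end

section
/- Let n ≥ 1 and k ≥ 2 be integers. Let (v_1,…,v_n) be a basis of ℝ^n and let ε > 0 be such that max_{i=1,…,n} ‖A'v_i‖ ≥ ε·‖A'‖ for every A' ∈ M_n(ℝ) (operator norm). Suppose A ∈ M_n(ℝ) and symmetric bilinear maps R_1,…,R_n : ℝ^n × ℝ^n → ℝ^n satisfy, for each i = 1,…,n and all ξ, η ∈ ℝ^n, k⁻¹·(I + A)(R_i(ξ,η)) = k·R_i(k⁻¹(I + A)ξ, k⁻¹(I + A)η), and max_{i=1,…,n} { 3‖R_i − 2Q_{v_i}‖ + ‖A‖·‖R_i‖ } <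 ε, where the norm of a bilinear map F is ‖F‖ = sup{‖F(ξ,η)‖ : ‖ξ‖ ≤ 1, ‖η‖ ≤ 1}. Then A = 0. -/
open scoped RealInnerProductSpace

set_option maxHeartbeats 3000000

noncomputable section

/-- `ℝ^n` with the Euclidean inner product and norm. -/
abbrev E (n : ℕ) : Type := EuclideanSpace ℝ (Fin n)

/-- The symmetric bilinear map `Q_v(ξ,η) = ⟨ξ,η⟩·v − ⟨ξ,v⟩·η − ⟨η,v⟩·ξ`,
as a linear map in each variable. -/
def QvLin {n : ℕ} (v : E n) : E n →ₗ[ℝ] E n →ₗ[ℝ] E n :=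
  LinearMap.mk₂ ℝ (fun ξ η => ⟪ξ, η⟫ • v - ⟪ξ, v⟫ • η - ⟪η, v⟫ • ξ)
    (by
      intro ξ ξ' η
      simp only [inner_add_left, add_smul, smul_add]
      abel)
    (by
      intro r ξ η
      simp only [real_inner_smul_left]
      module)
    (by
      intro ξ η η'
      simp only [inner_add_right, inner_add_left, add_smul, smul_add]
      abel)
    (by
      intro r ξ η
      simp only [real_inner_smul_right, real_inner_smul_left]
      module)

/-- `Q_v` as a continuous bilinear map, so that its norm
`‖F‖ = sup{‖F(ξ,η)‖ : ‖ξ‖ ≤ 1, ‖η‖ ≤ 1}` is available. -/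
def QvL {n : ℕ} (v : E n) : E n →L[ℝ] E n →L[ℝ] E n :=
  LinearMap.toContinuousLinearMap
    { toFun := fun ξ => LinearMap.toContinuousLinearMap (QvLin v ξ)
      map_add' := by
        intro x y
        ext η
        simp [map_add]
      map_smul' := by
        intro r x
        ext η
        simp }

lemma QvL_apply' {n : ℕ} (v ξ η : E n) :
    QvL v ξ η = ⟪ξ, η⟫ • v - ⟪ξ, v⟫ • η - ⟪η, v⟫ • ξ := rfl

/-- From the scaling relation, the derived derivation-type identity. -/
lemma rel_deriv {n k : ℕ} (hk : 2 ≤ k) (A : E n →L[ℝ] E n)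
    (R : E n →L[ℝ] E n →L[ℝ] E n)
    (hrel : ∀ ξ η : E n,
      (k : ℝ)⁻¹ • (1 + A) (R ξ η)
        = (k : ℝ) • R ((k : ℝ)⁻¹ • (1 + A) ξ) ((k : ℝ)⁻¹ • (1 + A) η))
    (ξ η : E n) :
    A (R ξ η) = R (A ξ) η + R ξ (A η) + R (A ξ) (A η) := by
  have hk0 : ((k : ℝ)) ≠ 0 := Nat.cast_ne_zero.mpr (by omega)
  have h := hrel ξ η
  simp only [map_smul, ContinuousLinearMap.smul_apply, smul_smul] at h
  have h2 := congrArg (fun x => (k : ℝ) • x) h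
  simp only [smul_smul] at h2
  rw [mul_inv_cancel₀ hk0, one_smul] at h2
  have h3 : (1 + A) (R ξ η) = R ((1 + A) ξ) ((1 + A) η) := by
    rw [h2]
    rw [show ((k:ℝ) * ((k:ℝ) * ((k:ℝ)⁻¹ * (k:ℝ)⁻¹))) = 1 by field_simp, one_smul]
  simp only [ContinuousLinearMap.add_apply, ContinuousLinearMap.one_apply, map_add] at h3
  calc A (R ξ η) = (R ξ η + A (R ξ η)) - R ξ η := by abel
    _ = R (A ξ) η + R ξ (A η) + R (A ξ) (A η) := by rw [h3]; abel

/-- Summing the commutator-type expression against an orthonormal basis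
recovers `n⟪Aξ, v⟫`. -/
lemma sum_inner_T {n : ℕ} (A : E n →L[ℝ] E n) (v ξ : E n) :
    (n : ℝ) * ⟪A ξ, v⟫ =
      ∑ j, ⟪⟪ξ, (EuclideanSpace.basisFun (Fin n) ℝ) j⟫ • A v
            - (⟪A ξ, (EuclideanSpace.basisFun (Fin n) ℝ) j⟫
               + ⟪ξ, A ((EuclideanSpace.basisFun (Fin n) ℝ) j)⟫) • v
            + ⟪A ξ, v⟫ • (EuclideanSpace.basisFun (Fin n) ℝ) j
            + ⟪A ((EuclideanSpace.basisFun (Fin n) ℝ) j), v⟫ • ξ,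
          (EuclideanSpace.basisFun (Fin n) ℝ) j⟫ := by
  set b := EuclideanSpace.basisFun (Fin n) ℝ with hb
  set B := ContinuousLinearMap.adjoint A with hB
  have hAd : ∀ x y : E n, ⟪x, A y⟫ = ⟪B x, y⟫ := by
    intro x y; rw [hB, ContinuousLinearMap.adjoint_inner_left]
  have hAd' : ∀ x y : E n, ⟪A x, y⟫ = ⟪x, B y⟫ := by
    intro x y; rw [hB, ContinuousLinearMap.adjoint_inner_right]
  have hbb : ∀ j, ⟪b j, b j⟫ = (1:ℝ) := fun j => by
    rw [real_inner_self_eq_norm_sq, b.orthonormal.1 j]; norm_num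
  have hterm : ∀ j, ⟪⟪ξ, b j⟫ • A v - (⟪A ξ, b j⟫ + ⟪ξ, A (b j)⟫) • v
        + ⟪A ξ, v⟫ • b j + ⟪A (b j), v⟫ • ξ, b j⟫
      = ⟪ξ, b j⟫ * ⟪b j, A v⟫ - (⟪A ξ, b j⟫ * ⟪b j, v⟫ + ⟪B ξ, b j⟫ * ⟪b j, v⟫)
        + ⟪A ξ, v⟫ + ⟪ξ, b j⟫ * ⟪b j, B v⟫ := by
    intro j
    simp only [inner_add_left, inner_sub_left, real_inner_smul_left]
    rw [hbb j, real_inner_comm (A v) (b j), real_inner_comm v (b j),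
      hAd ξ (b j), hAd' (b j) v]
    ring
  rw [Finset.sum_congr rfl fun j _ => hterm j]
  simp only [Finset.sum_add_distrib, Finset.sum_sub_distrib,
    OrthonormalBasis.sum_inner_mul_inner, Finset.sum_const, Finset.card_univ,
    Fintype.card_fin, nsmul_eq_mul]
  rw [← hAd ξ v, ← hAd' ξ v]
  ring

/-- The central estimate: if `A` acts as a derivation-with-correction on `R`,
then the adjoint of `A` is small on `w`. -/
lemma adjoint_bound {n : ℕ} (hn : 1 ≤ n) (A : E n →L[ℝ] E n) (w : E n)
    (R : E n →L[ℝ] E n →L[ℝ] E n)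
    (hrel' : ∀ ξ η : E n, A (R ξ η) = R (A ξ) η + R ξ (A η) + R (A ξ) (A η)) :
    ‖(ContinuousLinearMap.adjoint A) w‖
      ≤ ‖A‖ * (3 * ‖R - (2:ℝ) • QvL w‖ + ‖A‖ * ‖R‖) / 2 := by
  set b := EuclideanSpace.basisFun (Fin n) ℝ with hb
  have hbnorm : ∀ j, ‖b j‖ = 1 := fun j => b.orthonormal.1 j
  have hGid : ∀ ξ η : E n,
      (2:ℝ) • (⟪ξ, η⟫ • A w - (⟪A ξ, η⟫ + ⟪ξ, A η⟫) • w
          + ⟪A ξ, w⟫ • η + ⟪A η, w⟫ • ξ)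
        = R (A ξ) (A η) - A ((R - (2:ℝ) • QvL w) ξ η)
          + (R - (2:ℝ) • QvL w) (A ξ) η
          + (R - (2:ℝ) • QvL w) ξ (A η) := by
    intro ξ η
    simp only [ContinuousLinearMap.sub_apply, ContinuousLinearMap.smul_apply,
      QvL_apply', map_sub, map_smul, hrel' ξ η]
    module
  set S := R - (2:ℝ) • QvL w with hS
  set M := ‖A‖ * (3 * ‖S‖ + ‖A‖ * ‖R‖) with hM
  have hRn : (0:ℝ) ≤ ‖R‖ := R.opNorm_nonneg
  have hSn : (0:ℝ) ≤ ‖S‖ := S.opNorm_nonneg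
  have hAn : (0:ℝ) ≤ ‖A‖ := A.opNorm_nonneg
  have hM0 : 0 ≤ M := by rw [hM]; positivity
  set ξ := (ContinuousLinearMap.adjoint A) w with hξ
  have hj : ∀ j : Fin n,
      ⟪⟪ξ, b j⟫ • A w - (⟪A ξ, b j⟫ + ⟪ξ, A (b j)⟫) • w
        + ⟪A ξ, w⟫ • b j + ⟪A (b j), w⟫ • ξ, b j⟫ ≤ M * ‖ξ‖ / 2 := by
    intro j
    set T := ⟪ξ, b j⟫ • A w - (⟪A ξ, b j⟫ + ⟪ξ, A (b j)⟫) • w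
        + ⟪A ξ, w⟫ • b j + ⟪A (b j), w⟫ • ξ with hT
    have hGle : ‖R (A ξ) (A (b j)) - A (S ξ (b j)) + S (A ξ) (b j) + S ξ (A (b j))‖
        ≤ M * ‖ξ‖ := by
      have h1 : ‖R (A ξ) (A (b j))‖ ≤ ‖R‖ * ‖A ξ‖ * ‖A (b j)‖ := R.le_opNorm₂ _ _
      have h2 : ‖A (S ξ (b j))‖ ≤ ‖A‖ * (‖S‖ * ‖ξ‖ * ‖b j‖) :=
        le_trans (A.le_opNorm _) (by
          have := S.le_opNorm₂ ξ (b j)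
          nlinarith)
      have h3 : ‖S (A ξ) (b j)‖ ≤ ‖S‖ * ‖A ξ‖ * ‖b j‖ := S.le_opNorm₂ _ _
      have h4 : ‖S ξ (A (b j))‖ ≤ ‖S‖ * ‖ξ‖ * ‖A (b j)‖ := S.le_opNorm₂ _ _
      have hAξ : ‖A ξ‖ ≤ ‖A‖ * ‖ξ‖ := A.le_opNorm ξ
      have hAbj : ‖A (b j)‖ ≤ ‖A‖ := by
        have := A.le_opNorm (b j); rwa [hbnorm j, mul_one] at this
      have htri : ‖R (A ξ) (A (b j)) - A (S ξ (b j)) + S (A ξ) (b j) + S ξ (A (b j))‖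
          ≤ ‖R (A ξ) (A (b j))‖ + ‖A (S ξ (b j))‖ + ‖S (A ξ) (b j)‖
            + ‖S ξ (A (b j))‖ := by
        calc ‖R (A ξ) (A (b j)) - A (S ξ (b j)) + S (A ξ) (b j) + S ξ (A (b j))‖
            ≤ ‖R (A ξ) (A (b j)) - A (S ξ (b j)) + S (A ξ) (b j)‖ + ‖S ξ (A (b j))‖ :=
              norm_add_le _ _
          _ ≤ ‖R (A ξ) (A (b j)) - A (S ξ (b j))‖ + ‖S (A ξ) (b j)‖ + ‖S ξ (A (b j))‖ := by
              have := norm_add_le (R (A ξ) (A (b j)) - A (S ξ (b j))) (S (A ξ) (b j))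
              linarith
          _ ≤ ‖R (A ξ) (A (b j))‖ + ‖A (S ξ (b j))‖ + ‖S (A ξ) (b j)‖ + ‖S ξ (A (b j))‖ := by
              have := norm_sub_le (R (A ξ) (A (b j))) (A (S ξ (b j)))
              linarith
      rw [hbnorm j] at h2 h3
      have hξn : (0:ℝ) ≤ ‖ξ‖ := norm_nonneg _
      have hAξn : (0:ℝ) ≤ ‖A ξ‖ := norm_nonneg _
      have hAbn : (0:ℝ) ≤ ‖A (b j)‖ := norm_nonneg _
      rw [hM]
      nlinarith [mul_le_mul_of_nonneg_left
          (mul_le_mul hAξ hAbj hAbn (by positivity : (0:ℝ) ≤ ‖A‖ * ‖ξ‖)) hRn,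
        mul_le_mul_of_nonneg_left hAξ hSn,
        mul_le_mul_of_nonneg_left hAbj (mul_nonneg hSn hξn)]
    have h2T : (2:ℝ) * ‖T‖ ≤ M * ‖ξ‖ := by
      have e : ‖(2:ℝ) • T‖ = 2 * ‖T‖ := by
        rw [norm_smul]; norm_num
      rw [← e, hT, hGid ξ (b j)]
      exact hGle
    calc ⟪T, b j⟫ ≤ ‖T‖ * ‖b j‖ := real_inner_le_norm _ _
      _ = ‖T‖ := by rw [hbnorm j, mul_one]
      _ ≤ M * ‖ξ‖ / 2 := by linarith
  have hAd' : ⟪A ξ, w⟫ = ‖ξ‖ ^ 2 := by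
    rw [hξ, ← ContinuousLinearMap.adjoint_inner_right,
      real_inner_self_eq_norm_sq]
  have hsum := sum_inner_T A w ξ
  rw [← hb] at hsum
  have hsum_le : (n : ℝ) * ‖ξ‖ ^ 2 ≤ (n : ℝ) * (M * ‖ξ‖ / 2) := by
    rw [← hAd', hsum]
    calc (∑ j, ⟪⟪ξ, b j⟫ • A w - (⟪A ξ, b j⟫ + ⟪ξ, A (b j)⟫) • w
          + ⟪A ξ, w⟫ • b j + ⟪A (b j), w⟫ • ξ, b j⟫)
        ≤ ∑ _j : Fin n, M * ‖ξ‖ / 2 := Finset.sum_le_sum fun j _ => hj j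
      _ = (n : ℝ) * (M * ‖ξ‖ / 2) := by
          simp [Finset.sum_const, Finset.card_univ, mul_comm]
  have hnpos : (0:ℝ) < n := by exact_mod_cast Nat.lt_of_lt_of_le Nat.zero_lt_one hn
  have hsq : ‖ξ‖ ^ 2 ≤ M * ‖ξ‖ / 2 := (mul_le_mul_iff_of_pos_left hnpos).mp hsum_le
  have hfin : ‖ξ‖ ≤ M / 2 := by
    nlinarith [norm_nonneg ξ, hM0]
  calc ‖ξ‖ ≤ M / 2 := hfin
    _ = ‖A‖ * (3 * ‖S‖ + ‖A‖ * ‖R‖) / 2 := by rw [hM]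

/-- computational core of Lemma 2.3: let `(v_1,…,v_n)` be a basis of `ℝ^n`
and `ε > 0` with `max_i ‖A' v_i‖ ≥ ε·‖A'‖` for every matrix `A'`. If the matrix `A` and
the symmetric bilinear maps `R_1,…,R_n` satisfy
`k⁻¹·(I + A)(R_i(ξ,η)) = k·R_i(k⁻¹(I + A)ξ, k⁻¹(I + A)η)` and
`max_i { 3‖R_i − 2Q_{v_i}‖ + ‖A‖·‖R_i‖ } < ε`, then `A = 0`. -/
theorem stmt1 {n k : ℕ} (hn : 1 ≤ n) (hk : 2 ≤ k)
    (v : Fin n → E n) (hv : LinearIndependent ℝ v)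
    (ε : ℝ) (hε : 0 < ε)
    (hvε : ∀ A' : E n →L[ℝ] E n, ∃ i, ε * ‖A'‖ ≤ ‖A' (v i)‖)
    (A : E n →L[ℝ] E n)
    (R : Fin n → (E n →L[ℝ] E n →L[ℝ] E n))
    (hRsymm : ∀ i, ∀ ξ η : E n, R i ξ η = R i η ξ)
    (hrel : ∀ i, ∀ ξ η : E n,
      (k : ℝ)⁻¹ • (1 + A) (R i ξ η)
        = (k : ℝ) • R i ((k : ℝ)⁻¹ • (1 + A) ξ) ((k : ℝ)⁻¹ • (1 + A) η))
    (hnorm : ∀ i, 3 * ‖R i - (2 : ℝ) • QvL (v i)‖ + ‖A‖ * ‖R i‖ < ε) :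
    A = 0 := by
  by_cases hA0 : A = 0
  · exact hA0
  exfalso
  have hApos : (0:ℝ) < ‖A‖ :=
    lt_of_le_of_ne A.opNorm_nonneg fun h => hA0 (A.opNorm_zero_iff.mp h.symm)
  obtain ⟨i, hi⟩ := hvε (ContinuousLinearMap.adjoint A)
  have hBA : ‖ContinuousLinearMap.adjoint A‖ = ‖A‖ :=
    ContinuousLinearMap.adjoint.norm_map A
  rw [hBA] at hi
  have h1 := adjoint_bound hn A (v i) (R i) (rel_deriv hk A (R i) (hrel i))
  have h2 := hnorm i
  have h3 : ‖A‖ * (3 * ‖R i - (2:ℝ) • QvL (v i)‖ + ‖A‖ * ‖R i‖) < ‖A‖ * ε :=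
    (mul_lt_mul_iff_of_pos_left hApos).mpr h2
  nlinarith [mul_pos hε hApos]

end
end

section
/- Let k ≥ 2 be an integer and let λ, δ > 0 satisfy λ + kδ < 1. Let V ⊆ ℝ^N be a convex open set, let F : V → ℝ^N and G : V → V be differentiable maps, and let z* ∈ V. Assume ‖DF_z‖ ≤ λ for all z ∈ V (operator norm of the Fréchet derivative), ‖D(G^m)_z − I‖ ≤ δ for all z ∈ V and all m = 1,…,k (where G^m is the m-fold iterate of G), F(z*) = z*, and F(G(z*)) = G^k(z*). Then G(z*) = z*. -/
/-- analytic core of Lemma `lemma:fixed point`: let `k ≥ 2`, `λ, δ > 0`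
with `λ + kδ < 1`, let `V ⊆ ℝ^N` be a convex open set, `F : V → ℝ^N` and `G : V → V`
differentiable with `‖DF_z‖ ≤ λ` and `‖D(G^m)_z − I‖ ≤ δ` on `V` for `m = 1,…,k`.
If `F(z*) = z*` and `F(G(z*)) = G^k(z*)` for some `z* ∈ V`, then `G(z*) = z*`. -/
theorem stmt13 {N k : ℕ} (hk : 2 ≤ k) (lam δ : ℝ) (hlam : 0 < lam) (hδ : 0 < δ)
    (hlk : lam + (k : ℝ) * δ < 1)
    (V : Set (EuclideanSpace ℝ (Fin N))) (hVo : IsOpen V) (hVc : Convex ℝ V)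
    (F G : EuclideanSpace ℝ (Fin N) → EuclideanSpace ℝ (Fin N))
    (hGV : Set.MapsTo G V V)
    (hF : ∀ z ∈ V, DifferentiableAt ℝ F z ∧ ‖fderiv ℝ F z‖ ≤ lam)
    (hG : ∀ m : ℕ, 1 ≤ m → m ≤ k → ∀ z ∈ V, DifferentiableAt ℝ (G^[m]) z ∧
      ‖fderiv ℝ (G^[m]) z
        - ContinuousLinearMap.id ℝ (EuclideanSpace ℝ (Fin N))‖ ≤ δ)
    (zs : EuclideanSpace ℝ (Fin N)) (hzs : zs ∈ V)
    (hFz : F zs = zs) (hrel : F (G zs) = G^[k] zs) :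
    G zs = zs := by
  set d : ℝ := ‖G zs - zs‖ with hd
  have hGzs : G zs ∈ V := hGV hzs
  -- Lipschitz bound for G^[j] - id on V
  have key : ∀ j : ℕ, 1 ≤ j → j ≤ k →
      ‖(G^[j] (G zs) - G zs) - (G^[j] zs - zs)‖ ≤ δ * d := by
    intro j hj1 hjk
    have hdiff : ∀ x ∈ V, DifferentiableAt ℝ (fun z => G^[j] z - z) x := fun x hx =>
      ((hG j hj1 hjk x hx).1).sub differentiableAt_id
    have hbound : ∀ x ∈ V, ‖fderiv ℝ (fun z => G^[j] z - z) x‖ ≤ δ := by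
      intro x hx
      have h1 : fderiv ℝ (fun z => G^[j] z - z) x
          = fderiv ℝ (G^[j]) x - ContinuousLinearMap.id ℝ (EuclideanSpace ℝ (Fin N)) := by
        rw [fderiv_fun_sub (hG j hj1 hjk x hx).1 differentiableAt_fun_id, fderiv_id']
      rw [h1]; exact (hG j hj1 hjk x hx).2
    have := hVc.norm_image_sub_le_of_norm_fderiv_le hdiff hbound hzs hGzs
    simpa using this
  -- induction: ‖G^[m] zs - zs - m • (G zs - zs)‖ ≤ (m-1) * δ * d
  have main : ∀ m : ℕ, 1 ≤ m → m ≤ k →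
      ‖G^[m] zs - zs - (m : ℝ) • (G zs - zs)‖ ≤ ((m : ℝ) - 1) * δ * d := by
    intro m
    induction m with
    | zero => omega
    | succ n ih =>
      intro _ hnk
      rcases Nat.eq_zero_or_pos n with h1 | h1
      · subst h1; simp
      · have hn1 : 1 ≤ n := h1
        have hn : n ≤ k := le_trans (Nat.le_succ n) hnk
        have ihn := ih hn1 hn
        have hkey := key n hn1 hn
        have hiter : G^[n+1] zs = G^[n] (G zs) := Function.iterate_succ_apply G n zs
        have heq : G^[n+1] zs - zs - ((n:ℝ)+1) • (G zs - zs)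
            = ((G^[n] (G zs) - G zs) - (G^[n] zs - zs))
              + (G^[n] zs - zs - (n : ℝ) • (G zs - zs)) := by
          rw [hiter, add_smul, one_smul]
          abel
        calc ‖G^[n+1] zs - zs - ((n+1 : ℕ) : ℝ) • (G zs - zs)‖
            ≤ δ * d + ((n : ℝ) - 1) * δ * d := by
              push_cast
              rw [heq]
              exact (norm_add_le _ _).trans (add_le_add hkey ihn)
          _ = (((n+1 : ℕ) : ℝ) - 1) * δ * d := by push_cast; ring
  have hmain := main k (le_trans one_le_two hk) le_rfl
  -- contraction bound
  have hFbound : ‖G^[k] zs - zs‖ ≤ lam * d := by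
    have := hVc.norm_image_sub_le_of_norm_fderiv_le (fun x hx => (hF x hx).1)
      (fun x hx => (hF x hx).2) hzs hGzs
    rw [hrel, hFz] at this
    simpa using this
  -- combine
  have hd0 : d = 0 := by
    by_contra h
    have hdpos : 0 < d := lt_of_le_of_ne (norm_nonneg _) (Ne.symm h)
    have hlow : (k : ℝ) * d - ((k:ℝ) - 1) * δ * d ≤ ‖G^[k] zs - zs‖ := by
      have : ‖(k : ℝ) • (G zs - zs)‖ - ‖G^[k] zs - zs - (k : ℝ) • (G zs - zs)‖
          ≤ ‖G^[k] zs - zs‖ := by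
        have := norm_sub_norm_le ((k : ℝ) • (G zs - zs)) ((k : ℝ) • (G zs - zs) - (G^[k] zs - zs))
        simp only [sub_sub_cancel] at this
        calc ‖(k : ℝ) • (G zs - zs)‖ - ‖G^[k] zs - zs - (k : ℝ) • (G zs - zs)‖
            = ‖(k : ℝ) • (G zs - zs)‖ - ‖(k : ℝ) • (G zs - zs) - (G^[k] zs - zs)‖ := by
              rw [norm_sub_rev]
          _ ≤ ‖G^[k] zs - zs‖ := this
      have hnk : ‖(k : ℝ) • (G zs - zs)‖ = (k : ℝ) * d := by
        rw [norm_smul]; simp [hd, Nat.abs_cast k]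
      linarith [hmain, this]
    have hk2 : (2 : ℝ) ≤ (k : ℝ) := by exact_mod_cast hk
    have h1 : (k : ℝ) * d ≤ (lam + ((k:ℝ) - 1) * δ) * d := by nlinarith [hFbound]
    nlinarith
  have h0 : G zs - zs = 0 := norm_eq_zero.mp hd0
  exact sub_eq_zero.mp h0
end

section
/- (Weil's Implicit Function Theorem.) Let M₀, M₁, M₂ be smooth finite-dimensional manifolds and let Φ₀ : M₀ → M₁ and Φ₁ : M₁ → M₂ be smooth maps such that Φ₁ ∘ Φ₀ is a constant map with value x₂ ∈ M₂. Let x₀ ∈ M₀ and x₁ = Φ₀(x₀). If the kernel of the differential (DΦ₁)_{x₁} equals the image of the differential (DΦ₀)_{x₀}, then there exists a neighborhood U of x₁ in M₁ such that Φ₀(M₀) ∩ U = Φ₁⁻¹(x₂) ∩ U. -/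
open scoped Manifold

set_option maxHeartbeats 1000000

open Set Filter Metric
open scoped Topology NNReal

lemma weil_core {E₀ E₁ E₂ : Type*}
    [NormedAddCommGroup E₀] [NormedSpace ℝ E₀] [FiniteDimensional ℝ E₀]
    [NormedAddCommGroup E₁] [NormedSpace ℝ E₁] [FiniteDimensional ℝ E₁]
    [NormedAddCommGroup E₂] [NormedSpace ℝ E₂]
    {f : E₀ → E₁} {g : E₁ → E₂} {u₀ : E₀}
    (hf : ContDiffAt ℝ 1 f u₀) (hg : ContDiffAt ℝ 1 g (f u₀))
    (hconst : ∀ᶠ a in 𝓝 u₀, g (f a) = g (f u₀))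
    (hker : LinearMap.ker (fderiv ℝ g (f u₀)).toLinearMap = LinearMap.range (fderiv ℝ f u₀).toLinearMap)
    {s : Set E₀} (hs : s ∈ 𝓝 u₀) :
    ∀ᶠ y in 𝓝 (f u₀), g y = g (f u₀) → y ∈ f '' s := by
  set u₁ := f u₀ with hu₁
  set A := fderiv ℝ f u₀ with hA
  set B := fderiv ℝ g u₁ with hB
  -- complement of ker B
  obtain ⟨W, hW⟩ := Submodule.exists_isCompl (LinearMap.ker B.toLinearMap)
  set T : W →L[ℝ] E₂ := B.comp W.subtypeL with hT
  have hTinj : Function.Injective T := by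
    intro w w' hww'
    have h1 : (w : E₁) - w' ∈ LinearMap.ker B.toLinearMap := by
      simp only [LinearMap.mem_ker, map_sub]
      have : B w = B w' := hww'
      simp [this]
    have h2 : (w : E₁) - w' ∈ W := sub_mem w.2 w'.2
    have : (w : E₁) - w' = 0 := by
      have := hW.disjoint.le_bot (Submodule.mem_inf.2 ⟨h1, h2⟩)
      simpa using this
    exact Subtype.ext (sub_eq_zero.1 this)
  obtain ⟨K, hK0, hK⟩ := (T : W →ₗ[ℝ] E₂).exists_antilipschitzWith
    (LinearMap.ker_eq_bot.2 hTinj)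
  have hKnorm : ∀ w : W, ‖w‖ ≤ (K : ℝ) * ‖T w‖ := by
    intro w
    have := hK.le_mul_dist w 0
    simpa [dist_eq_norm] using this
  set ε : ℝ := (2 * (K : ℝ))⁻¹ with hε
  have hεpos : 0 < ε := by positivity
  -- continuity of fderiv g near u₁
  obtain ⟨v, hv, hgv⟩ := hg.contDiffOn le_rfl (by simp)
  obtain ⟨v2, hv2sub, hv2open, hv2mem⟩ := _root_.mem_nhds_iff.1 hv
  have hgv2 : ContDiffOn ℝ 1 g v2 := hgv.mono hv2sub
  have hfderiv_cont : ContinuousOn (fderiv ℝ g) v2 :=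
    hgv2.continuousOn_fderiv_of_isOpen hv2open le_rfl
  have hcontat : ContinuousAt (fderiv ℝ g) u₁ :=
    hfderiv_cont.continuousAt (hv2open.mem_nhds hv2mem)
  have hev : ∀ᶠ y in 𝓝 u₁, ‖fderiv ℝ g y - B‖ < ε ∧ y ∈ v2 := by
    have h1 : ∀ᶠ y in 𝓝 u₁, fderiv ℝ g y ∈ ball B ε :=
      hcontat (ball_mem_nhds B hεpos)
    filter_upwards [h1, hv2open.mem_nhds hv2mem] with y hy1 hy2
    exact ⟨by simpa [dist_eq_norm] using mem_ball.1 hy1, hy2⟩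
  obtain ⟨δ, hδpos, hδ⟩ := Metric.mem_nhds_iff.1 hev
  -- neighborhood of u₀
  have hfc : ContinuousAt f u₀ := hf.continuousAt
  have hball : ball u₁ (δ / 2) ∈ 𝓝 u₁ := ball_mem_nhds _ (by positivity)
  have hN : ∀ᶠ a in 𝓝 u₀, a ∈ s ∧ g (f a) = g u₁ ∧ f a ∈ ball u₁ (δ / 2) := by
    filter_upwards [hs, hconst, hfc hball] with a h1 h2 h3
    exact ⟨h1, h2, h3⟩
  obtain ⟨r, hrpos, hr⟩ := Metric.mem_nhds_iff.1 hN
  -- the submersion-like map F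
  set F : E₀ × W → E₁ := fun p => f p.1 + p.2 with hF
  have hstrict : HasStrictFDerivAt F
      (A.coprod W.subtypeL) (u₀, (0 : W)) := by
    have h1 : HasStrictFDerivAt (fun p : E₀ × W => f p.1)
        (A.comp (ContinuousLinearMap.fst ℝ E₀ W)) (u₀, (0 : W)) :=
      (hf.hasStrictFDerivAt one_ne_zero).comp _ hasStrictFDerivAt_fst
    have h2 : HasStrictFDerivAt (fun p : E₀ × W => (p.2 : E₁))
        (W.subtypeL.comp (ContinuousLinearMap.snd ℝ E₀ W)) (u₀, (0 : W)) :=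
      (W.subtypeL.comp (ContinuousLinearMap.snd ℝ E₀ W)).hasStrictFDerivAt
    have h3 := h1.add h2
    have heq : A.coprod W.subtypeL
        = A.comp (ContinuousLinearMap.fst ℝ E₀ W)
          + W.subtypeL.comp (ContinuousLinearMap.snd ℝ E₀ W) := by
      ext p
      · simp
      · simp
    rw [heq]
    exact h3
  have hsurj : LinearMap.range (A.coprod W.subtypeL).toLinearMap = ⊤ := by
    rw [ContinuousLinearMap.range_coprod, Submodule.range_subtypeL, ← hker]
    exact hW.sup_eq_top
  have hmap : map F (𝓝 (u₀, (0 : W))) = 𝓝 u₁ := by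
    have := hstrict.map_nhds_eq_of_surj hsurj
    simpa [hF] using this
  rw [← hmap, eventually_map]
  have hprod : (ball u₀ r ×ˢ ball (0 : W) (δ / 2)) ∈ 𝓝 (u₀, (0 : W)) :=
    prod_mem_nhds (ball_mem_nhds _ hrpos) (ball_mem_nhds _ (by positivity))
  filter_upwards [hprod] with p hp hgF
  obtain ⟨a, w⟩ := p
  obtain ⟨hp1, hp2⟩ := hp
  obtain ⟨has, hgfa, hfaball⟩ := hr hp1
  have hw0 : w = 0 := by
    by_contra hw0
    -- mean value estimate on φ w' = g (f a + w') - T w'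
    set φ : W → E₂ := fun w' => g (f a + (w' : E₁)) - T w' with hφ
    have key : ∀ w' ∈ ball (0 : W) (δ / 2), HasFDerivWithinAt φ
        (((fderiv ℝ g (f a + (w' : E₁))) - B).comp W.subtypeL)
        (ball (0 : W) (δ / 2)) w' := by
      intro w' hw'
      have hy : f a + (w' : E₁) ∈ ball u₁ δ := by
        have h1 : ‖f a - u₁‖ < δ / 2 := by simpa [dist_eq_norm] using hfaball
        have h2 : ‖(w' : E₁)‖ < δ / 2 := by
          have := mem_ball_zero_iff.1 hw'
          simpa using this
        rw [mem_ball, dist_eq_norm]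
        calc ‖f a + (w' : E₁) - u₁‖ = ‖(f a - u₁) + (w' : E₁)‖ := by
              rw [add_sub_right_comm]
          _ ≤ ‖f a - u₁‖ + ‖(w' : E₁)‖ := norm_add_le _ _
          _ < δ / 2 + δ / 2 := by linarith
          _ = δ := by ring
      have hyv : f a + (w' : E₁) ∈ v2 ∧ ‖fderiv ℝ g (f a + (w' : E₁)) - B‖ < ε := by
        have := hδ hy
        exact ⟨this.2, this.1⟩
      have hgdiff : HasFDerivAt g (fderiv ℝ g (f a + (w' : E₁))) (f a + (w' : E₁)) := by
        have : DifferentiableAt ℝ g (f a + (w' : E₁)) :=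
          (hgv2.differentiableOn one_ne_zero).differentiableAt (hv2open.mem_nhds hyv.1)
        exact this.hasFDerivAt
      have haff : HasFDerivAt (fun w' : W => f a + (w' : E₁)) W.subtypeL w' :=
        (W.subtypeL.hasFDerivAt).const_add (f a)
      have hcomp : HasFDerivAt (fun w' : W => g (f a + (w' : E₁)))
          ((fderiv ℝ g (f a + (w' : E₁))).comp W.subtypeL) w' :=
        hgdiff.comp w' haff
      have : HasFDerivAt φ
          ((fderiv ℝ g (f a + (w' : E₁))).comp W.subtypeL - T) w' :=
        hcomp.sub (T.hasFDerivAt)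
      have heq : (fderiv ℝ g (f a + (w' : E₁))).comp W.subtypeL - T
          = ((fderiv ℝ g (f a + (w' : E₁))) - B).comp W.subtypeL := by
        ext x; simp [hT]
      rw [heq] at this
      exact this.hasFDerivWithinAt
    have hbound : ∀ w' ∈ ball (0 : W) (δ / 2),
        ‖(((fderiv ℝ g (f a + (w' : E₁))) - B).comp W.subtypeL)‖ ≤ ε := by
      intro w' hw'
      have hy : f a + (w' : E₁) ∈ ball u₁ δ := by
        have h1 : ‖f a - u₁‖ < δ / 2 := by simpa [dist_eq_norm] using hfaball
        have h2 : ‖(w' : E₁)‖ < δ / 2 := by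
          have := mem_ball_zero_iff.1 hw'
          simpa using this
        rw [mem_ball, dist_eq_norm]
        calc ‖f a + (w' : E₁) - u₁‖ = ‖(f a - u₁) + (w' : E₁)‖ := by
              rw [add_sub_right_comm]
          _ ≤ ‖f a - u₁‖ + ‖(w' : E₁)‖ := norm_add_le _ _
          _ < δ / 2 + δ / 2 := by linarith
          _ = δ := by ring
      have h1 : ‖fderiv ℝ g (f a + (w' : E₁)) - B‖ < ε := (hδ hy).1
      calc ‖((fderiv ℝ g (f a + (w' : E₁))) - B).comp W.subtypeL‖
          ≤ ‖fderiv ℝ g (f a + (w' : E₁)) - B‖ * ‖W.subtypeL‖ :=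
            ContinuousLinearMap.opNorm_comp_le _ _
        _ ≤ ‖fderiv ℝ g (f a + (w' : E₁)) - B‖ * 1 := by
            exact mul_le_mul_of_nonneg_left (Submodule.norm_subtypeL_le W) (norm_nonneg _)
        _ ≤ ε := by rw [mul_one]; exact le_of_lt h1
    have hmv := (convex_ball (0 : W) (δ / 2)).norm_image_sub_le_of_norm_hasFDerivWithin_le
      key hbound (mem_ball_self (by positivity)) hp2
    -- φ w - φ 0 = -(T w) since g (f a + w) = g u₁ = g (f a)
    have hφw : φ w = g u₁ - T w := by
      have : g (f a + (w : E₁)) = g u₁ := hgF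
      simp [hφ, this]
    have hφ0 : φ 0 = g u₁ := by simp [hφ, hgfa]
    rw [hφw, hφ0] at hmv
    have hTw : ‖T w‖ ≤ ε * ‖w‖ := by
      have : ‖g u₁ - T w - g u₁‖ = ‖T w‖ := by simp
      rw [this] at hmv
      simpa using hmv
    have h2 : ‖w‖ ≤ (K : ℝ) * ‖T w‖ := hKnorm w
    have hKpos : (0 : ℝ) < K := hK0
    have : ‖T w‖ ≤ (1 / 2) * ‖T w‖ := by
      calc ‖T w‖ ≤ ε * ‖w‖ := hTw
        _ ≤ ε * ((K : ℝ) * ‖T w‖) := by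
            exact mul_le_mul_of_nonneg_left h2 (le_of_lt hεpos)
        _ = (1 / 2) * ‖T w‖ := by
            rw [hε]
            field_simp
    have hTw0 : ‖T w‖ = 0 := by nlinarith [norm_nonneg (T w)]
    have : T w = 0 := norm_eq_zero.1 hTw0
    exact hw0 (hTinj (by simp [this]))
  refine ⟨a, has, ?_⟩
  simp [hF, hw0]
/-- Weil's Implicit Function Theorem, Theorem `thm:Weil`: let
`Φ₀ : M₀ → M₁` and `Φ₁ : M₁ → M₂` be smooth maps between smooth finite-dimensional
manifolds such that `Φ₁ ∘ Φ₀` is constant with value `x₂`. If the kernel of the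
differential of `Φ₁` at `x₁ = Φ₀(x₀)` equals the image of the differential of `Φ₀`
at `x₀`, then there is a neighborhood `U` of `x₁` with
`Φ₀(M₀) ∩ U = Φ₁⁻¹(x₂) ∩ U`. -/
theorem stmt14
    {E₀ E₁ E₂ : Type*}
    [NormedAddCommGroup E₀] [NormedSpace ℝ E₀] [FiniteDimensional ℝ E₀]
    [NormedAddCommGroup E₁] [NormedSpace ℝ E₁] [FiniteDimensional ℝ E₁]
    [NormedAddCommGroup E₂] [NormedSpace ℝ E₂] [FiniteDimensional ℝ E₂]
    {M₀ M₁ M₂ : Type*}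
    [TopologicalSpace M₀] [ChartedSpace E₀ M₀] [IsManifold 𝓘(ℝ, E₀) ((⊤ : ℕ∞) : WithTop ℕ∞) M₀]
    [TopologicalSpace M₁] [ChartedSpace E₁ M₁] [IsManifold 𝓘(ℝ, E₁) ((⊤ : ℕ∞) : WithTop ℕ∞) M₁]
    [TopologicalSpace M₂] [ChartedSpace E₂ M₂] [IsManifold 𝓘(ℝ, E₂) ((⊤ : ℕ∞) : WithTop ℕ∞) M₂]
    (Φ₀ : M₀ → M₁) (Φ₁ : M₁ → M₂)
    (hΦ₀ : ContMDiff 𝓘(ℝ, E₀) 𝓘(ℝ, E₁) (⊤ : ℕ∞) Φ₀)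
    (hΦ₁ : ContMDiff 𝓘(ℝ, E₁) 𝓘(ℝ, E₂) (⊤ : ℕ∞) Φ₁)
    (x₂ : M₂) (hconst : ∀ y, Φ₁ (Φ₀ y) = x₂)
    (x₀ : M₀)
    (hker : LinearMap.ker (mfderiv 𝓘(ℝ, E₁) 𝓘(ℝ, E₂) Φ₁ (Φ₀ x₀)).toLinearMap
      = LinearMap.range (mfderiv 𝓘(ℝ, E₀) 𝓘(ℝ, E₁) Φ₀ x₀).toLinearMap) :
    ∃ U ∈ nhds (Φ₀ x₀), Set.range Φ₀ ∩ U = Φ₁ ⁻¹' {x₂} ∩ U := by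
  classical
  set x₁ : M₁ := Φ₀ x₀ with hx₁
  set φ₀ := extChartAt 𝓘(ℝ, E₀) x₀ with hφ₀
  set φ₁ := extChartAt 𝓘(ℝ, E₁) x₁ with hφ₁
  set φ₂ := extChartAt 𝓘(ℝ, E₂) (Φ₁ x₁) with hφ₂
  set u₀ : E₀ := φ₀ x₀ with hu₀
  set f : E₀ → E₁ := fun u => φ₁ (Φ₀ (φ₀.symm u)) with hfdef
  set g : E₁ → E₂ := fun y => φ₂ (Φ₁ (φ₁.symm y)) with hgdef
  have hx₀src : x₀ ∈ φ₀.source := mem_extChartAt_source x₀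
  have hx₁src : x₁ ∈ φ₁.source := mem_extChartAt_source x₁
  have hφ₀inv : φ₀.symm u₀ = x₀ := φ₀.left_inv hx₀src
  have hfu₀ : f u₀ = φ₁ x₁ := by rw [hfdef]; simp only [hφ₀inv]; rfl
  -- smoothness in charts
  have hfC : ContDiffAt ℝ 1 f u₀ := by
    have h := (contMDiffAt_iff.1 (hΦ₀.contMDiffAt (x := x₀))).2
    rw [show Set.range 𝓘(ℝ, E₀) = Set.univ by simp, contDiffWithinAt_univ] at h
    exact (h.of_le (by exact_mod_cast le_top))
  have hgC : ContDiffAt ℝ 1 g (f u₀) := by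
    have h := (contMDiffAt_iff.1 (hΦ₁.contMDiffAt (x := x₁))).2
    rw [show Set.range 𝓘(ℝ, E₁) = Set.univ by simp, contDiffWithinAt_univ] at h
    rw [hfu₀]
    exact (h.of_le (by exact_mod_cast le_top))
  -- mfderiv = fderiv in charts
  have hmf : mfderiv 𝓘(ℝ, E₀) 𝓘(ℝ, E₁) Φ₀ x₀ = fderiv ℝ f u₀ := by
    have hmd : MDifferentiableAt 𝓘(ℝ, E₀) 𝓘(ℝ, E₁) Φ₀ x₀ :=
      hΦ₀.mdifferentiableAt (by simp)
    rw [hmd.mfderiv]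
    have h2 : writtenInExtChartAt 𝓘(ℝ, E₀) 𝓘(ℝ, E₁) x₀ Φ₀ = f := rfl
    rw [h2, show Set.range 𝓘(ℝ, E₀) = Set.univ by simp, fderivWithin_univ]
  have hmg : mfderiv 𝓘(ℝ, E₁) 𝓘(ℝ, E₂) Φ₁ x₁ = fderiv ℝ g (f u₀) := by
    have hmd : MDifferentiableAt 𝓘(ℝ, E₁) 𝓘(ℝ, E₂) Φ₁ x₁ :=
      hΦ₁.mdifferentiableAt (by simp)
    rw [hmd.mfderiv]
    have h2 : writtenInExtChartAt 𝓘(ℝ, E₁) 𝓘(ℝ, E₂) x₁ Φ₁ = g := rfl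
    rw [h2, show Set.range 𝓘(ℝ, E₁) = Set.univ by simp, fderivWithin_univ, hfu₀]
  have hker' : LinearMap.ker (fderiv ℝ g (f u₀)).toLinearMap = LinearMap.range (fderiv ℝ f u₀).toLinearMap := by
    rw [← hmf, ← hmg]; exact hker
  -- the chart-source condition
  have hc1 : Φ₁ x₁ = x₂ := hconst x₀
  have hsrc : ∀ᶠ u in 𝓝 u₀, Φ₀ (φ₀.symm u) ∈ φ₁.source := by
    have h0 : ContinuousAt Φ₀ (φ₀.symm u₀) := by
      rw [hφ₀inv]; exact hΦ₀.continuous.continuousAt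
    have h1 : ContinuousAt (fun u => Φ₀ (φ₀.symm u)) u₀ :=
      h0.comp (continuousAt_extChartAt_symm x₀)
    have h2 : φ₁.source ∈ 𝓝 (Φ₀ (φ₀.symm u₀)) := by
      rw [hφ₀inv]; exact extChartAt_source_mem_nhds x₁
    exact h1 h2
  have h4 : φ₁.symm (f u₀) = x₁ := by rw [hfu₀]; exact φ₁.left_inv hx₁src
  -- constancy in charts
  have hconstf : ∀ᶠ u in 𝓝 u₀, g (f u) = g (f u₀) := by
    filter_upwards [hsrc] with u hu
    have h5 : φ₁.symm (f u) = Φ₀ (φ₀.symm u) := φ₁.left_inv hu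
    show φ₂ (Φ₁ (φ₁.symm (f u))) = φ₂ (Φ₁ (φ₁.symm (f u₀)))
    rw [h5, h4, hconst (φ₀.symm u), hc1]
  -- apply the core lemma
  have hs : {u : E₀ | Φ₀ (φ₀.symm u) ∈ φ₁.source} ∈ 𝓝 u₀ := hsrc
  have hcore := weil_core hfC hgC hconstf hker' hs
  -- build the neighborhood U
  set V : Set E₁ := {y | g y = g (f u₀) → y ∈ f '' {u : E₀ | Φ₀ (φ₀.symm u) ∈ φ₁.source}}
    with hV
  have hVnhds : V ∈ 𝓝 (f u₀) := hcore
  refine ⟨φ₁.source ∩ φ₁ ⁻¹' V, ?_, ?_⟩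
  · apply Filter.inter_mem (extChartAt_source_mem_nhds x₁)
    have h1 : ContinuousAt φ₁ x₁ := continuousAt_extChartAt x₁
    exact h1 (by rw [← hfu₀]; exact hVnhds)
  · ext z
    simp only [Set.mem_inter_iff, Set.mem_range, Set.mem_preimage, Set.mem_singleton_iff]
    constructor
    · rintro ⟨⟨y₀, rfl⟩, hzU⟩
      exact ⟨hconst y₀, hzU⟩
    · rintro ⟨hz2, hzsrc, hzpre⟩
      have hy : g (φ₁ z) = g (f u₀) := by
        show φ₂ (Φ₁ (φ₁.symm (φ₁ z))) = φ₂ (Φ₁ (φ₁.symm (f u₀)))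
        rw [φ₁.left_inv hzsrc, h4, hz2, hc1]
      obtain ⟨u, hus, hfu⟩ := hzpre hy
      have hzeq : z = Φ₀ (φ₀.symm u) := by
        have h3 : φ₁.symm (f u) = Φ₀ (φ₀.symm u) := φ₁.left_inv hus
        calc z = φ₁.symm (φ₁ z) := (φ₁.left_inv hzsrc).symm
          _ = φ₁.symm (f u) := by rw [hfu]
          _ = Φ₀ (φ₀.symm u) := h3
      exact ⟨⟨φ₀.symm u, hzeq.symm⟩, hzsrc, hzpre⟩
end

section
/- Let n ≥ 1 and k ≥ 2 be integers and write F̄(x) = k⁻¹x. Let U be a neighborhood of 0 in ℝ^n and let G₁, G₂ : U → ℝ^n be C^∞ maps with G_i(0) = 0, the first derivative D⁽¹⁾₀G_i = I at 0, and equal second derivatives at 0: D⁽²⁾₀G₁ = D⁽²⁾₀G₂. Assume there is an r > 0 such that for each i = 1,2 and every x with ‖x‖ ≤ r, all the partial iterates G_i^m(k⁻¹x) for m = 1,…,k are defined (remain in U), and k⁻¹·G_i(x) = G_i^k(k⁻¹x) (that is, F̄ ∘ G_i = G_i^k ∘ F̄ near 0). Then G₁ = G₂ on a neighborhood of 0.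 -/
noncomputable section

set_option maxHeartbeats 1000000

lemma cubic_aux {n : ℕ} {V : Set (E n)} (hV : IsOpen V) (h0V : (0:E n) ∈ V)
    {f : E n → E n} (hf : ContDiffOn ℝ (⊤:ℕ∞) f V) (hf0 : f 0 = 0)
    (h1 : fderiv ℝ f 0 = 0) (h2 : fderiv ℝ (fderiv ℝ f) 0 = 0) :
    ∃ ρ > (0:ℝ), ∃ C : ℝ, 0 ≤ C ∧ Metric.closedBall (0:E n) ρ ⊆ V ∧
      ∀ x : E n, ‖x‖ ≤ ρ → ‖f x‖ ≤ C * ‖x‖^3 := by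
  obtain ⟨ρ, hρ, hρV⟩ : ∃ ρ > (0:ℝ), Metric.closedBall (0:E n) ρ ⊆ V := by
    rcases Metric.nhds_basis_closedBall.mem_iff.1 (hV.mem_nhds h0V) with ⟨ρ, hρ, h⟩
    exact ⟨ρ, hρ, h⟩
  have hD1 : ContDiffOn ℝ (⊤:ℕ∞) (fderiv ℝ f) V := hf.fderiv_of_isOpen hV (by exact_mod_cast le_top)
  have hD2 : ContDiffOn ℝ (⊤:ℕ∞) (fderiv ℝ (fderiv ℝ f)) V := hD1.fderiv_of_isOpen hV (by exact_mod_cast le_top)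
  have hD3cont :=
    hD2.continuousOn_fderiv_of_isOpen hV (by exact_mod_cast le_top)
  obtain ⟨C0, hC0⟩ := (isCompact_closedBall (0:E n) ρ).exists_bound_of_continuousOn
    (hD3cont.mono hρV)
  set C := max C0 0 with hCdef
  have hCnn : (0:ℝ) ≤ C := le_max_right _ _
  have hC := fun z (hz : z ∈ Metric.closedBall (0:E n) ρ) => (hC0 z hz).trans (le_max_left C0 0)
  have hdiffAtf : ∀ z ∈ Metric.closedBall (0:E n) ρ, DifferentiableAt ℝ f z := by
    intro z hz
    exact (hf.contDiffAt (hV.mem_nhds (hρV hz))).differentiableAt (by simp)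
  have hmemself : ∀ x : E n, x ∈ Metric.closedBall (0:E n) ‖x‖ := by
    intro x; simp [Metric.mem_closedBall, dist_zero_right]
  have hzero : ∀ x : E n, (0:E n) ∈ Metric.closedBall (0:E n) ‖x‖ := by
    intro x; simp [Metric.mem_closedBall]
  have step2 : ∀ z ∈ Metric.closedBall (0:E n) ρ, ‖fderiv ℝ (fderiv ℝ f) z‖ ≤ C * ‖z‖ := by
    intro z hz
    have := (convex_closedBall (0:E n) ρ).norm_image_sub_le_of_norm_fderiv_le
      (fun z hz => (hD2.contDiffAt (hV.mem_nhds (hρV hz))).differentiableAt (by simp)) hC (Metric.mem_closedBall_self hρ.le) hz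
    rw [h2] at this
    calc ‖fderiv ℝ (fderiv ℝ f) z‖ = ‖fderiv ℝ (fderiv ℝ f) z - 0‖ := by congr 1; ext v w; simp
      _ ≤ C * ‖z - 0‖ := this
      _ = C * ‖z‖ := by rw [sub_zero]
  have step1 : ∀ x : E n, ‖x‖ ≤ ρ → ‖fderiv ℝ f x‖ ≤ C * ‖x‖ * ‖x‖ := by
    intro x hx
    have hsub : Metric.closedBall (0:E n) ‖x‖ ⊆ Metric.closedBall (0:E n) ρ :=
      Metric.closedBall_subset_closedBall hx
    have bound : ∀ z ∈ Metric.closedBall (0:E n) ‖x‖, ‖fderiv ℝ (fderiv ℝ f) z‖ ≤ C * ‖x‖ := by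
      intro z hz
      have hz' : ‖z‖ ≤ ‖x‖ := by simpa [dist_zero_right] using hz
      exact (step2 z (hsub hz)).trans (mul_le_mul_of_nonneg_left hz' hCnn)
    have := (convex_closedBall (0:E n) ‖x‖).norm_image_sub_le_of_norm_fderiv_le
      (fun z hz => (hD1.contDiffAt (hV.mem_nhds (hρV (hsub hz)))).differentiableAt (by simp)) bound (hzero x) (hmemself x)
    rw [h1, sub_zero, sub_zero] at this
    exact this
  refine ⟨ρ, hρ, C, hCnn, hρV, ?_⟩
  intro x hx
  have hsub : Metric.closedBall (0:E n) ‖x‖ ⊆ Metric.closedBall (0:E n) ρ :=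
    Metric.closedBall_subset_closedBall hx
  have bound : ∀ z ∈ Metric.closedBall (0:E n) ‖x‖, ‖fderiv ℝ f z‖ ≤ C * ‖x‖ * ‖x‖ := by
    intro z hz
    have hz' : ‖z‖ ≤ ‖x‖ := by simpa [dist_zero_right] using hz
    have h3 := step1 z ((hz'.trans hx))
    have h4 : ‖z‖ * ‖z‖ ≤ ‖x‖ * ‖x‖ :=
      mul_le_mul hz' hz' (norm_nonneg z) (norm_nonneg x)
    nlinarith [hCnn]
  have := (convex_closedBall (0:E n) ‖x‖).norm_image_sub_le_of_norm_fderiv_le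
    (fun z hz => hdiffAtf z (hsub hz)) bound (hzero x) (hmemself x)
  rw [hf0, sub_zero, sub_zero] at this
  have h' : ‖f x‖ ≤ C * ‖x‖ * ‖x‖ * ‖x‖ := this
  calc ‖f x‖ ≤ C * ‖x‖ * ‖x‖ * ‖x‖ := h'
    _ = C * ‖x‖^3 := by ring

/-- injectivity part of Lemma `lemma:Theta`: if two `C^∞` germs `G₁, G₂`
at `0 ∈ ℝ^n` fix `0`, have identity first derivative and equal second derivatives at `0`,
and both satisfy the relation `F̄ ∘ G_i = G_i^k ∘ F̄` (with `F̄(x) = k⁻¹x`) near `0`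
(with all partial iterates defined), then `G₁ = G₂` on a neighborhood of `0`. -/
theorem stmt15 {n k : ℕ} (hn : 1 ≤ n) (hk : 2 ≤ k)
    (U : Set (E n)) (hU : U ∈ nhds (0 : E n))
    (G₁ G₂ : E n → E n)
    (hsm₁ : ContDiffOn ℝ (⊤ : ℕ∞) G₁ U) (hsm₂ : ContDiffOn ℝ (⊤ : ℕ∞) G₂ U)
    (h0₁ : G₁ 0 = 0) (h0₂ : G₂ 0 = 0)
    (hD₁ : fderiv ℝ G₁ 0 = ContinuousLinearMap.id ℝ (E n))
    (hD₂ : fderiv ℝ G₂ 0 = ContinuousLinearMap.id ℝ (E n))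
    (hD2 : iteratedFDeriv ℝ 2 G₁ 0 = iteratedFDeriv ℝ 2 G₂ 0)
    (r : ℝ) (hr : 0 < r) (hrU : Metric.closedBall (0 : E n) r ⊆ U)
    (hiter : ∀ x : E n, ‖x‖ ≤ r → ∀ m ≤ k,
      G₁^[m] ((k : ℝ)⁻¹ • x) ∈ U ∧ G₂^[m] ((k : ℝ)⁻¹ • x) ∈ U)
    (hrel₁ : ∀ x : E n, ‖x‖ ≤ r → (k : ℝ)⁻¹ • G₁ x = G₁^[k] ((k : ℝ)⁻¹ • x))
    (hrel₂ : ∀ x : E n, ‖x‖ ≤ r → (k : ℝ)⁻¹ • G₂ x = G₂^[k] ((k : ℝ)⁻¹ • x)) :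
    ∃ V ∈ nhds (0 : E n), Set.EqOn G₁ G₂ V := by
  have hk0 : (0:ℝ) < (k:ℝ) := by exact_mod_cast (by omega : 0 < k)
  have hk2 : (2:ℝ) ≤ (k:ℝ) := by exact_mod_cast hk
  set V := interior U with hVdef
  have hVopen : IsOpen V := isOpen_interior
  have h0V : (0:E n) ∈ V := mem_interior_iff_mem_nhds.2 hU
  have hsV₁ : ContDiffOn ℝ (⊤:ℕ∞) G₁ V := hsm₁.mono interior_subset
  have hsV₂ : ContDiffOn ℝ (⊤:ℕ∞) G₂ V := hsm₂.mono interior_subset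
  have hca₁ : ContDiffAt ℝ (⊤:ℕ∞) G₁ 0 := hsV₁.contDiffAt (hVopen.mem_nhds h0V)
  have hca₂ : ContDiffAt ℝ (⊤:ℕ∞) G₂ 0 := hsV₂.contDiffAt (hVopen.mem_nhds h0V)
  have hd₁0 : DifferentiableAt ℝ G₁ 0 := hca₁.differentiableAt (by simp)
  have hd₂0 : DifferentiableAt ℝ G₂ 0 := hca₂.differentiableAt (by simp)
  -- second derivatives agree
  have hsecond : fderiv ℝ (fderiv ℝ G₁) 0 = fderiv ℝ (fderiv ℝ G₂) 0 := by
    apply ContinuousLinearMap.ext; intro v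
    apply ContinuousLinearMap.ext; intro w
    have e1 := iteratedFDeriv_two_apply (𝕜 := ℝ) G₁ (0:E n) ![v, w]
    have e2 := iteratedFDeriv_two_apply (𝕜 := ℝ) G₂ (0:E n) ![v, w]
    simp only [Matrix.cons_val_zero, Matrix.cons_val_one, Matrix.head_cons] at e1 e2
    rw [← e1, ← e2, hD2]
  -- the difference and its 2-jet
  have hfV : ContDiffOn ℝ (⊤:ℕ∞) (fun x => G₁ x - G₂ x) V := hsV₁.sub hsV₂
  have hf0 : (fun x => G₁ x - G₂ x) 0 = 0 := by simp [h0₁, h0₂]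
  have h1 : fderiv ℝ (fun x => G₁ x - G₂ x) 0 = 0 := by
    rw [fderiv_fun_sub hd₁0 hd₂0, hD₁, hD₂, sub_self]
  have heq : (fderiv ℝ (fun x => G₁ x - G₂ x))
      =ᶠ[nhds (0:E n)] (fun z => fderiv ℝ G₁ z - fderiv ℝ G₂ z) := by
    filter_upwards [hVopen.mem_nhds h0V] with z hz
    exact fderiv_sub
      ((hsV₁.contDiffAt (hVopen.mem_nhds hz)).differentiableAt (by simp))
      ((hsV₂.contDiffAt (hVopen.mem_nhds hz)).differentiableAt (by simp))
  have hd₁' : DifferentiableAt ℝ (fderiv ℝ G₁) 0 :=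
    (hca₁.fderiv_right (m := ((⊤:ℕ∞) : WithTop ℕ∞)) (by exact_mod_cast le_top)).differentiableAt (by simp)
  have hd₂' : DifferentiableAt ℝ (fderiv ℝ G₂) 0 :=
    (hca₂.fderiv_right (m := ((⊤:ℕ∞) : WithTop ℕ∞)) (by exact_mod_cast le_top)).differentiableAt (by simp)
  have h2 : fderiv ℝ (fderiv ℝ (fun x => G₁ x - G₂ x)) 0 = 0 := by
    rw [heq.fderiv_eq, fderiv_fun_sub hd₁' hd₂', hsecond, sub_self]
  obtain ⟨ρ₁, hρ₁, C, hCnn, hρ₁V, hcub⟩ := cubic_aux hVopen h0V hfV hf0 h1 h2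
  -- choose the Lipschitz constant L
  have hevL : ∀ᶠ t in nhds (1:ℝ), t^(4*k) < 2 := by
    have hc : ContinuousAt (fun t : ℝ => t ^ (4*k)) 1 := (continuous_pow _).continuousAt
    have h12 : ((1:ℝ))^(4*k) < 2 := by norm_num
    exact hc (Iio_mem_nhds h12)
  rcases Metric.eventually_nhds_iff.1 hevL with ⟨ε, hε, hεP⟩
  set L : ℝ := 1 + min ε 1 / 2 with hLdef
  have hmin : 0 < min ε 1 := lt_min hε one_pos
  have hL1 : 1 < L := by rw [hLdef]; linarith
  have hL0 : (0:ℝ) < L := by linarith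
  have hL2 : L^(4*k) < 2 := by
    apply hεP
    have hd : L - 1 = min ε 1 / 2 := by rw [hLdef]; ring
    rw [Real.dist_eq, show L - 1 = min ε 1 / 2 from hd, abs_of_pos (by linarith)]
    calc min ε 1 / 2 < min ε 1 := by linarith
      _ ≤ ε := min_le_left _ _
  have hLk4 : L^k ≤ L^(4*k) := pow_le_pow_right₀ hL1.le (by omega)
  have hLkk : L^k ≤ (k:ℝ) := le_trans (le_of_lt (lt_of_le_of_lt hLk4 hL2)) hk2
  have hLk1 : (1:ℝ) ≤ L^k := by simpa using pow_le_pow_right₀ hL1.le (Nat.zero_le k)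
  -- radius where both derivatives are ≤ L
  have hc₁ : ContinuousAt (fderiv ℝ G₁) 0 :=
    (hsV₁.continuousOn_fderiv_of_isOpen hVopen (by exact_mod_cast le_top)).continuousAt
      (hVopen.mem_nhds h0V)
  have hc₂ : ContinuousAt (fderiv ℝ G₂) 0 :=
    (hsV₂.continuousOn_fderiv_of_isOpen hVopen (by exact_mod_cast le_top)).continuousAt
      (hVopen.mem_nhds h0V)
  have hn₁ : ‖fderiv ℝ G₁ 0‖ < L := by
    rw [hD₁]; exact lt_of_le_of_lt ContinuousLinearMap.norm_id_le (by linarith)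
  have hn₂ : ‖fderiv ℝ G₂ 0‖ < L := by
    rw [hD₂]; exact lt_of_le_of_lt ContinuousLinearMap.norm_id_le (by linarith)
  have hev₁ : ∀ᶠ z in nhds (0:E n), ‖fderiv ℝ G₁ z‖ < L := hc₁.norm (Iio_mem_nhds hn₁)
  have hev₂ : ∀ᶠ z in nhds (0:E n), ‖fderiv ℝ G₂ z‖ < L := hc₂.norm (Iio_mem_nhds hn₂)
  rcases Metric.eventually_nhds_iff.1 (hev₁.and hev₂) with ⟨ε₂, hε₂, hP2⟩
  -- the final radius
  set ρ := min ρ₁ (min r (ε₂/2)) with hρdef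
  have hρpos : 0 < ρ := lt_min hρ₁ (lt_min hr (by linarith))
  have hρρ₁ : ρ ≤ ρ₁ := min_le_left _ _
  have hρr : ρ ≤ r := le_trans (min_le_right _ _) (min_le_left _ _)
  have hρε : ρ ≤ ε₂/2 := le_trans (min_le_right _ _) (min_le_right _ _)
  have hballV : Metric.closedBall (0:E n) ρ ⊆ V :=
    (Metric.closedBall_subset_closedBall hρρ₁).trans hρ₁V
  have hDb : ∀ z : E n, ‖z‖ ≤ ρ → ‖fderiv ℝ G₁ z‖ ≤ L ∧ ‖fderiv ℝ G₂ z‖ ≤ L := by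
    intro z hz
    have hdz : dist z 0 < ε₂ := by rw [dist_zero_right]; linarith
    exact ⟨(hP2 hdz).1.le, (hP2 hdz).2.le⟩
  -- Lipschitz estimates
  have hLip₁ : ∀ a b : E n, ‖a‖ ≤ ρ → ‖b‖ ≤ ρ → ‖G₁ a - G₁ b‖ ≤ L * ‖a - b‖ := by
    intro a b ha hb
    have := (convex_closedBall (0:E n) ρ).norm_image_sub_le_of_norm_fderiv_le
      (fun z hz => (hsV₁.contDiffAt (hVopen.mem_nhds (hballV hz))).differentiableAt
        (by simp))
      (fun z hz => (hDb z (by simpa [dist_zero_right] using hz)).1)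
      (mem_closedBall_zero_iff.2 hb) (mem_closedBall_zero_iff.2 ha)
    exact this
  have hLip₂ : ∀ a b : E n, ‖a‖ ≤ ρ → ‖b‖ ≤ ρ → ‖G₂ a - G₂ b‖ ≤ L * ‖a - b‖ := by
    intro a b ha hb
    have := (convex_closedBall (0:E n) ρ).norm_image_sub_le_of_norm_fderiv_le
      (fun z hz => (hsV₂.contDiffAt (hVopen.mem_nhds (hballV hz))).differentiableAt
        (by simp))
      (fun z hz => (hDb z (by simpa [dist_zero_right] using hz)).2)
      (mem_closedBall_zero_iff.2 hb) (mem_closedBall_zero_iff.2 ha)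
    exact this
  -- orbits stay small
  have horb : ∀ (G : E n → E n), G 0 = 0 →
      (∀ a b : E n, ‖a‖ ≤ ρ → ‖b‖ ≤ ρ → ‖G a - G b‖ ≤ L * ‖a - b‖) →
      ∀ y : E n, L^k * ‖y‖ ≤ ρ → ∀ j, j ≤ k → ‖G^[j] y‖ ≤ L^j * ‖y‖ := by
    intro G hG0 hGlip y hy j
    induction j with
    | zero => intro _; simp
    | succ j ih =>
      intro hjk
      have hj : j ≤ k := Nat.le_of_succ_le hjk
      have hGj := ih hj
      have hjle : L^j ≤ L^k := pow_le_pow_right₀ hL1.le hj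
      have hGjρ : ‖G^[j] y‖ ≤ ρ :=
        (hGj.trans (mul_le_mul_of_nonneg_right hjle (norm_nonneg y))).trans hy
      rw [Function.iterate_succ_apply']
      have hl := hGlip (G^[j] y) 0 hGjρ (by simp [hρpos.le])
      rw [hG0, sub_zero, sub_zero] at hl
      calc ‖G (G^[j] y)‖ ≤ L * ‖G^[j] y‖ := hl
        _ ≤ L * (L^j * ‖y‖) := mul_le_mul_of_nonneg_left hGj hL0.le
        _ = L^(j+1) * ‖y‖ := by rw [pow_succ]; ring
  -- main renormalization estimate
  set θ := L^(4*k) / (k:ℝ) with hθdef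
  have hθ0 : 0 ≤ θ := by
    rw [hθdef]; positivity
  have hθ1 : θ < 1 := by rw [hθdef, div_lt_one hk0]; exact lt_of_lt_of_le hL2 hk2
  have main : ∀ m : ℕ, ∀ x : E n, ‖x‖ ≤ ρ → ‖G₁ x - G₂ x‖ ≤ C * θ^m * ‖x‖^3 := by
    intro m
    induction m with
    | zero =>
      intro x hx
      simpa using hcub x (hx.trans hρρ₁)
    | succ m ih =>
      intro x hx
      set y := (k:ℝ)⁻¹ • x with hy
      have hky : ‖y‖ = (k:ℝ)⁻¹ * ‖x‖ := by
        rw [hy, norm_smul, norm_inv, Real.norm_natCast]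
      have h5 : L^k * (k:ℝ)⁻¹ ≤ 1 := by
        rw [← div_eq_mul_inv, div_le_one hk0]; exact hLkk
      have hyρk : L^k * ‖y‖ ≤ ‖x‖ := by
        rw [hky]
        calc L^k * ((k:ℝ)⁻¹ * ‖x‖) = (L^k * (k:ℝ)⁻¹) * ‖x‖ := by ring
          _ ≤ 1 * ‖x‖ := mul_le_mul_of_nonneg_right h5 (norm_nonneg x)
          _ = ‖x‖ := one_mul _
      have hyρ : L^k * ‖y‖ ≤ ρ := hyρk.trans hx
      have hynn : 0 ≤ L^k * ‖y‖ := by positivity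
      have horb₁ := horb G₁ h0₁ hLip₁ y hyρ
      have horb₂ := horb G₂ h0₂ hLip₂ y hyρ
      have horbρ₁ : ∀ j, j ≤ k → ‖G₁^[j] y‖ ≤ L^k * ‖y‖ := by
        intro j hj
        exact (horb₁ j hj).trans
          (mul_le_mul_of_nonneg_right (pow_le_pow_right₀ hL1.le hj) (norm_nonneg y))
      have horbρ₂ : ∀ j, j ≤ k → ‖G₂^[j] y‖ ≤ L^k * ‖y‖ := by
        intro j hj
        exact (horb₂ j hj).trans
          (mul_le_mul_of_nonneg_right (pow_le_pow_right₀ hL1.le hj) (norm_nonneg y))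
      set D := C * θ^m * (L^k*‖y‖)^3 with hD
      have hCθ : 0 ≤ C * θ^m := mul_nonneg hCnn (pow_nonneg hθ0 m)
      have hD0 : 0 ≤ D := by
        rw [hD]; exact mul_nonneg hCθ (pow_nonneg hynn 3)
      have hfz : ∀ j, j ≤ k → ‖G₁ (G₂^[j] y) - G₂ (G₂^[j] y)‖ ≤ D := by
        intro j hj
        have hz1 : ‖G₂^[j] y‖ ≤ L^k * ‖y‖ := horbρ₂ j hj
        have hzρ : ‖G₂^[j] y‖ ≤ ρ := hz1.trans hyρ
        refine (ih (G₂^[j] y) hzρ).trans ?_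
        rw [hD]
        have h6 : ‖G₂^[j] y‖^3 ≤ (L^k*‖y‖)^3 := pow_le_pow_left₀ (norm_nonneg _) hz1 3
        exact mul_le_mul_of_nonneg_left h6 hCθ
      have hO : ∀ j, j ≤ k → ‖G₁^[j] y - G₂^[j] y‖ ≤ (j:ℝ) * L^j * D := by
        intro j
        induction j with
        | zero => intro _; simp
        | succ j ihj =>
          intro hjk
          have hj : j ≤ k := Nat.le_of_succ_le hjk
          have dj := ihj hj
          have hmem₁ : ‖G₁^[j] y‖ ≤ ρ := (horbρ₁ j hj).trans hyρ
          have hmem₂ : ‖G₂^[j] y‖ ≤ ρ := (horbρ₂ j hj).trans hyρ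
          have t1 : ‖G₁ (G₁^[j] y) - G₁ (G₂^[j] y)‖ ≤ L * ‖G₁^[j] y - G₂^[j] y‖ :=
            hLip₁ _ _ hmem₁ hmem₂
          have t2 := hfz j hj
          have hsplit : G₁^[j+1] y - G₂^[j+1] y =
              (G₁ (G₁^[j] y) - G₁ (G₂^[j] y)) + (G₁ (G₂^[j] y) - G₂ (G₂^[j] y)) := by
            rw [Function.iterate_succ_apply', Function.iterate_succ_apply']
            abel
          have h1L : (1:ℝ) ≤ L^(j+1) := by
            simpa using pow_le_pow_right₀ hL1.le (Nat.zero_le (j+1))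
          have hLj0 : (0:ℝ) ≤ L^j := by positivity
          have hpsucc : L^(j+1) = L^j * L := pow_succ L j
          calc ‖G₁^[j+1] y - G₂^[j+1] y‖
              ≤ ‖G₁ (G₁^[j] y) - G₁ (G₂^[j] y)‖ + ‖G₁ (G₂^[j] y) - G₂ (G₂^[j] y)‖ := by
                rw [hsplit]; exact norm_add_le _ _
            _ ≤ L * ((j:ℝ) * L^j * D) + D := by
                refine add_le_add (le_trans t1 ?_) t2
                exact mul_le_mul_of_nonneg_left dj hL0.le
            _ = (j:ℝ) * L^(j+1) * D + D := by rw [hpsucc]; ring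
            _ ≤ (j:ℝ) * L^(j+1) * D + L^(j+1) * D :=
                add_le_add_right (le_mul_of_one_le_left hD0 h1L) _
            _ = ((j:ℝ)+1) * L^(j+1) * D := by ring
            _ = ((j+1 : ℕ):ℝ) * L^(j+1) * D := by push_cast; ring
      -- use the relation to conclude
      have hxr : ‖x‖ ≤ r := hx.trans hρr
      have hkne : (k:ℝ) ≠ 0 := ne_of_gt hk0
      have hGdiff : G₁ x - G₂ x = (k:ℝ) • (G₁^[k] y - G₂^[k] y) := by
        rw [hy, smul_sub, ← hrel₁ x hxr, ← hrel₂ x hxr, smul_inv_smul₀ hkne,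
          smul_inv_smul₀ hkne]
      have hnorm : ‖G₁ x - G₂ x‖ = (k:ℝ) * ‖G₁^[k] y - G₂^[k] y‖ := by
        rw [hGdiff, norm_smul, Real.norm_natCast]
      have hk' := hO k le_rfl
      have key : (k:ℝ) * ((k:ℝ) * L^k * D) = C * θ^(m+1) * ‖x‖^3 := by
        rw [hD, hky, hθdef, pow_succ]
        rw [div_pow, div_pow]
        field_simp
        ring
      rw [hnorm, ← key]
      exact mul_le_mul_of_nonneg_left hk' hk0.le
  -- conclude
  refine ⟨Metric.ball 0 ρ, Metric.ball_mem_nhds _ hρpos, ?_⟩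
  intro x hxmem
  have hx : ‖x‖ ≤ ρ := (mem_ball_zero_iff.1 hxmem).le
  have hlim : Filter.Tendsto (fun m : ℕ => C * θ^m * ‖x‖^3) Filter.atTop (nhds 0) := by
    have h := tendsto_pow_atTop_nhds_zero_of_lt_one hθ0 hθ1
    have h' := (h.const_mul C).mul_const (‖x‖^3)
    simpa using h'
  have hle : ‖G₁ x - G₂ x‖ ≤ 0 :=
    ge_of_tendsto hlim (Filter.Eventually.of_forall (fun m => main m x hx))
  have hzero : G₁ x - G₂ x = 0 := norm_le_zero_iff.mp hle
  exact sub_eq_zero.mp hzero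

end
end

section
/- Let Q : ℝ^n × ℝ^n → ℝ^n be a symmetric bilinear map, let U be a neighborhood of 0 in ℝ^n, let ε > 0, and let γ : (−ε,ε) × U → ℝ^n be a C^∞ map satisfying γ(0,x) = x for all x ∈ U and ∂γ/∂t(t,x) = Q(γ(t,x), γ(t,x)) for all (t,x) ∈ (−ε,ε) × U (i.e., γ is a local flow of the quadratic vector field X_Q(x) = Q(x,x)). Then for every t ∈ (−ε,ε): γ(t,0) = 0, the first derivative in x of γ(t,·) at 0 is the identity, and the second derivative in x of γ(t,·) at 0 equals 2t·Q. -/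
open scoped RealInnerProductSpace

noncomputable section

/-- A map `ℝ^n × ℝ^n → ℝ^n` is a symmetric bilinear map. -/
def IsSymmBilin {n : ℕ} (q : E n → E n → E n) : Prop :=
  (∀ ξ η, q ξ η = q η ξ) ∧ ∀ ξ, IsLinearMap ℝ (q ξ)

/-- Helper: a function with vanishing derivative on an open interval is constant there. -/
lemma eq_of_hasDerivAt_zero {X : Type*} [NormedAddCommGroup X] [NormedSpace ℝ X]
    {f : ℝ → X} {a b : ℝ} (h : ∀ t ∈ Set.Ioo a b, HasDerivAt f 0 t)
    {s t : ℝ} (hs : s ∈ Set.Ioo a b) (ht : t ∈ Set.Ioo a b) : f s = f t := by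
  apply (convex_Ioo a b).is_const_of_fderivWithin_eq_zero
    (fun x hx => ((h x hx).differentiableAt).differentiableWithinAt) _ hs ht
  intro x hx
  rw [fderivWithin_of_isOpen isOpen_Ioo hx, (h x hx).hasFDerivAt.fderiv]
  ext
  simp

set_option maxHeartbeats 2000000 in
/-- surjectivity part of Lemma `lemma:Theta`: if `γ` is a `C^∞` local flow
of the quadratic vector field `X_Q(x) = Q(x,x)` on a neighborhood `U` of `0`, i.e.
`γ(0,x) = x` and `∂γ/∂t(t,x) = Q(γ(t,x),γ(t,x))`, then for each `t ∈ (−ε,ε)` one has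
`γ(t,0) = 0`, `D⁽¹⁾₀ γ(t,·) = I`, and `D⁽²⁾₀ γ(t,·) = 2t·Q`. -/
theorem stmt16 {n : ℕ} (Q : E n → E n → E n) (hQ : IsSymmBilin Q)
    (U : Set (E n)) (hU : U ∈ nhds (0 : E n)) (ε : ℝ) (hε : 0 < ε)
    (γ : ℝ → E n → E n)
    (hsmooth : ContDiffOn ℝ (⊤ : ℕ∞) (fun p : ℝ × E n => γ p.1 p.2)
      (Set.Ioo (-ε) ε ×ˢ U))
    (hinit : ∀ x ∈ U, γ 0 x = x)
    (hode : ∀ t ∈ Set.Ioo (-ε) ε, ∀ x ∈ U,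
      HasDerivAt (fun s => γ s x) (Q (γ t x) (γ t x)) t) :
    ∀ t ∈ Set.Ioo (-ε) ε,
      γ t 0 = 0 ∧
      fderiv ℝ (γ t) 0 = ContinuousLinearMap.id ℝ (E n) ∧
      ∀ ξ η : E n, iteratedFDeriv ℝ 2 (γ t) 0 ![ξ, η] = (2 * t) • Q ξ η := by
  classical
  obtain ⟨hQsymm, hQlin⟩ := hQ
  -- the continuous bilinear version of `Q`
  have hQadd1 : ∀ x y z : E n, Q (x + y) z = Q x z + Q y z := fun x y z => by
    rw [hQsymm, (hQlin z).map_add, hQsymm z x, hQsymm z y]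
  have hQsmul1 : ∀ (c : ℝ) (x z : E n), Q (c • x) z = c • Q x z := fun c x z => by
    rw [hQsymm, (hQlin z).map_smul, hQsymm z x]
  set Qb : E n →ₗ[ℝ] E n →ₗ[ℝ] E n :=
    LinearMap.mk₂ ℝ Q hQadd1 hQsmul1 (fun x y z => (hQlin x).map_add y z)
      (fun c x y => (hQlin x).map_smul c y) with hQb_def
  set Qc : E n →L[ℝ] E n →L[ℝ] E n :=
    LinearMap.toContinuousLinearMap
      (((LinearMap.toContinuousLinearMap :
          (E n →ₗ[ℝ] E n) ≃ₗ[ℝ] (E n →L[ℝ] E n)).toLinearMap).comp Qb) with hQc_def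
  have hQc : ∀ x y, Qc x y = Q x y := by
    intro x y
    simp [hQc_def, hQb_def]
  have h0U : (0 : E n) ∈ U := mem_of_mem_nhds hU
  have hIoo0 : (0 : ℝ) ∈ Set.Ioo (-ε) ε := ⟨by linarith, hε⟩
  -- Part (a): γ t 0 = 0
  have ha : ∀ t ∈ Set.Ioo (-ε) ε, γ t 0 = 0 := by
    intro t ht
    set a : ℝ := ((-ε) + min t 0) / 2 with ha_def
    set b : ℝ := (max t 0 + ε) / 2 with hb_def
    have hmt : -ε < min t 0 := lt_min ht.1 (by linarith)
    have hMt : max t 0 < ε := max_lt ht.2 hε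
    have hab : Set.Icc a b ⊆ Set.Ioo (-ε) ε := by
      intro s hs
      constructor
      · have : -ε < a := by rw [ha_def]; linarith
        linarith [hs.1]
      · have : b < ε := by rw [hb_def]; linarith
        linarith [hs.2]
    have h0ab : (0 : ℝ) ∈ Set.Ioo a b := by
      constructor
      · rw [ha_def]; have := min_le_right t 0; linarith
      · rw [hb_def]; have := le_max_right t 0; linarith
    have htab : t ∈ Set.Ioo a b := by
      constructor
      · rw [ha_def]; have := min_le_left t 0; linarith
      · rw [hb_def]; have := le_max_left t 0; linarith
    have hcont : ContinuousOn (fun s => γ s 0) (Set.Icc a b) := fun s hs =>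
      ((hode s (hab hs) 0 h0U).continuousAt).continuousWithinAt
    obtain ⟨R, hR⟩ := (isCompact_Icc (a := a) (b := b)).exists_bound_of_continuousOn hcont
    set R' : ℝ := max R 0 with hR'_def
    have hR' : ∀ s ∈ Set.Icc a b, ‖γ s 0‖ ≤ R' := fun s hs => (hR s hs).trans (le_max_left _ _)
    set K : NNReal := (2 * ‖Qc‖ * R').toNNReal with hK_def
    have hKcoe : (K : ℝ) = 2 * ‖Qc‖ * R' := by
      rw [hK_def, Real.coe_toNNReal]
      positivity
    have hlip : LipschitzOnWith K (fun x => Qc x x) (Metric.closedBall (0 : E n) R') := by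
      apply LipschitzOnWith.of_dist_le_mul
      intro x hx y hy
      rw [Metric.mem_closedBall, dist_zero_right] at hx hy
      rw [dist_eq_norm, dist_eq_norm, hKcoe]
      have hkey : Qc x x - Qc y y = Qc x (x - y) + Qc (x - y) y := by
        simp only [map_sub, ContinuousLinearMap.sub_apply]
        abel
      rw [hkey]
      have h1 : ‖Qc x (x - y)‖ ≤ ‖Qc‖ * ‖x‖ * ‖x - y‖ := Qc.le_opNorm₂ x (x - y)
      have h2 : ‖Qc (x - y) y‖ ≤ ‖Qc‖ * ‖x - y‖ * ‖y‖ := Qc.le_opNorm₂ (x - y) y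
      have hn : (0:ℝ) ≤ ‖Qc‖ := Qc.opNorm_nonneg
      have hxy : (0:ℝ) ≤ ‖x - y‖ := norm_nonneg _
      calc ‖Qc x (x - y) + Qc (x - y) y‖ ≤ ‖Qc x (x - y)‖ + ‖Qc (x - y) y‖ := norm_add_le _ _
        _ ≤ ‖Qc‖ * ‖x‖ * ‖x - y‖ + ‖Qc‖ * ‖x - y‖ * ‖y‖ := add_le_add h1 h2
        _ ≤ ‖Qc‖ * R' * ‖x - y‖ + ‖Qc‖ * ‖x - y‖ * R' :=
            add_le_add (mul_le_mul_of_nonneg_right (mul_le_mul_of_nonneg_left hx hn) hxy)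
              (mul_le_mul_of_nonneg_left hy (mul_nonneg hn hxy))
        _ = 2 * ‖Qc‖ * R' * ‖x - y‖ := by ring
    have huniq := ODE_solution_unique_of_mem_Ioo (v := fun _ x => Qc x x)
      (s := fun _ => Metric.closedBall (0 : E n) R') (K := K) (fun _ _ => hlip)
      (t₀ := 0) (f := fun s => γ s 0) (g := fun _ => 0) h0ab
      (fun s hs => by
        refine ⟨?_, ?_⟩
        · have := hode s (hab (Set.mem_Icc_of_Ioo hs)) 0 h0U
          rwa [← hQc] at this
        · rw [Metric.mem_closedBall, dist_zero_right]
          exact hR' s (Set.mem_Icc_of_Ioo hs))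
      (fun s hs => by
        refine ⟨?_, ?_⟩
        · simpa using hasDerivAt_const s (0 : E n)
        · simp [hR'_def, le_max_right] )
      (by simpa using hinit 0 h0U)
    exact huniq htab
  -- Setup for the smooth machinery
  have h0V : (0 : E n) ∈ interior U := mem_interior_iff_mem_nhds.2 hU
  have hVU : interior U ⊆ U := interior_subset
  have hVopen : IsOpen (interior U) := isOpen_interior
  set S : Set (ℝ × E n) := Set.Ioo (-ε) ε ×ˢ interior U with hS_def
  have hS : IsOpen S := IsOpen.prod isOpen_Ioo hVopen
  set F : ℝ × E n → E n := fun p => γ p.1 p.2 with hF_def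
  have hF : ContDiffOn ℝ (⊤ : ℕ∞) F S := hsmooth.mono (Set.prod_mono_right hVU)
  obtain ⟨hFd, hF1⟩ := (contDiffOn_infty_iff_fderiv_of_isOpen hS).1 hF
  obtain ⟨hF1d, hF2⟩ := (contDiffOn_infty_iff_fderiv_of_isOpen hS).1 hF1
  obtain ⟨hF2d, -⟩ := (contDiffOn_infty_iff_fderiv_of_isOpen hS).1 hF2
  set F₁ := fderiv ℝ F with hF₁_def
  set F₂ := fderiv ℝ F₁ with hF₂_def
  set F₃ := fderiv ℝ F₂ with hF₃_def
  have hd1 : ∀ p ∈ S, HasFDerivAt F (F₁ p) p := fun p hp =>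
    (hFd.differentiableAt (hS.mem_nhds hp)).hasFDerivAt
  have hd2 : ∀ p ∈ S, HasFDerivAt F₁ (F₂ p) p := fun p hp =>
    (hF1d.differentiableAt (hS.mem_nhds hp)).hasFDerivAt
  have hd3 : ∀ p ∈ S, HasFDerivAt F₂ (F₃ p) p := fun p hp =>
    (hF2d.differentiableAt (hS.mem_nhds hp)).hasFDerivAt
  have hmem : ∀ t ∈ Set.Ioo (-ε) ε, ((t, (0 : E n)) : ℝ × E n) ∈ S := fun t ht =>
    Set.mem_prod.2 ⟨ht, h0V⟩
  set G : ℝ × E n → E n := fun p => Qc (F p) (F p) with hG_def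
  -- the time-derivative of F is G
  have hG : ∀ p ∈ S, F₁ p (1, 0) = G p := by
    intro p hp
    have hcurve : HasDerivAt (fun s : ℝ => ((s, p.2) : ℝ × E n)) ((1 : ℝ), (0 : E n)) p.1 :=
      (hasDerivAt_id p.1).prodMk (hasDerivAt_const p.1 p.2)
    have h1 : HasDerivAt (fun s => F (s, p.2)) (F₁ p (1, 0)) p.1 :=
      (hd1 p hp).comp_hasDerivAt_of_eq p.1 hcurve rfl
    have h2 : HasDerivAt (fun s => F (s, p.2)) (Q (γ p.1 p.2) (γ p.1 p.2)) p.1 :=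
      hode p.1 hp.1 p.2 (hVU hp.2)
    rw [h1.unique h2]
    exact (hQc _ _).symm
  -- derivative of G
  have hdG : ∀ p ∈ S, HasFDerivAt G
      ((Qc (F p)).comp (F₁ p) + (Qc.comp (F₁ p)).flip (F p)) p := by
    intro p hp
    exact (Qc.hasFDerivAt.comp p (hd1 p hp)).clm_apply (hd1 p hp)
  -- evaluation derivative lemmas
  have heval1 : ∀ p ∈ S, ∀ v : ℝ × E n,
      HasFDerivAt (fun q => F₁ q v) ((F₂ p).flip v) p := by
    intro p hp v
    have := (hd2 p hp).clm_apply (hasFDerivAt_const v p)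
    simpa using this
  have heval2 : ∀ p ∈ S, ∀ v w : ℝ × E n,
      HasFDerivAt (fun q => F₂ q v w) (((F₃ p).flip v).flip w) p := by
    intro p hp v w
    have h1 := (hd3 p hp).clm_apply (hasFDerivAt_const v p)
    have h2 := (by simpa using h1 : HasFDerivAt (fun q => F₂ q v) ((F₃ p).flip v) p)
    have := h2.clm_apply (hasFDerivAt_const w p)
    simpa using this
  -- G has derivative (F₂ p).flip (1,0) as well
  have hGder : ∀ p ∈ S, HasFDerivAt G ((F₂ p).flip ((1 : ℝ), (0 : E n))) p := by
    intro p hp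
    refine (heval1 p hp ((1 : ℝ), (0 : E n))).congr_of_eventuallyEq ?_
    exact Filter.eventually_of_mem (hS.mem_nhds hp) (fun q hq => (hG q hq).symm)
  -- symmetry of second derivatives
  have hsym2 : ∀ p ∈ S, ∀ u v, F₂ p u v = F₂ p v u := fun p hp =>
    second_derivative_symmetric_of_eventually
      (Filter.eventually_of_mem (hS.mem_nhds hp) (fun q hq => hd1 q hq)) (hd2 p hp)
  have hsym3 : ∀ p ∈ S, ∀ u v, F₃ p u v = F₃ p v u := fun p hp =>
    second_derivative_symmetric_of_eventually
      (Filter.eventually_of_mem (hS.mem_nhds hp) (fun q hq => hd2 q hq)) (hd3 p hp)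
  -- swap the last two slots of the third derivative
  have hswap23 : ∀ p ∈ S, ∀ u v w : ℝ × E n, F₃ p u v w = F₃ p u w v := by
    intro p hp u v w
    have hEq : (fun q => F₂ q v w) =ᶠ[nhds p] (fun q => F₂ q w v) :=
      Filter.eventually_of_mem (hS.mem_nhds hp) (fun q hq => hsym2 q hq v w)
    have d1 := (heval2 p hp v w).fderiv
    have d2 := (heval2 p hp w v).fderiv
    have h := Filter.EventuallyEq.fderiv_eq (𝕜 := ℝ) hEq
    rw [d1, d2] at h
    have := ContinuousLinearMap.ext_iff.1 h u
    simpa using this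
  -- the fderiv of γ t at points of interior U
  set inrE : E n →L[ℝ] ℝ × E n := ContinuousLinearMap.inr ℝ ℝ (E n) with hinrE_def
  set Ψ : ((ℝ × E n) →L[ℝ] E n) →L[ℝ] (E n →L[ℝ] E n) :=
    (ContinuousLinearMap.compL ℝ (E n) (ℝ × E n) (E n)).flip inrE with hΨ_def
  have hΨap : ∀ (M : (ℝ × E n) →L[ℝ] E n) (ξ : E n), Ψ M ξ = M (0, ξ) := by
    intro M ξ
    simp [hΨ_def, hinrE_def]
  have hcomp : ∀ t ∈ Set.Ioo (-ε) ε, ∀ x ∈ interior U,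
      HasFDerivAt (γ t) (Ψ (F₁ (t, x))) x := by
    intro t ht x hx
    have h1 : HasFDerivAt (fun y : E n => F (t, y)) ((F₁ (t, x)).comp inrE) x :=
      (hd1 (t, x) (Set.mem_prod.2 ⟨ht, hx⟩)).comp x (hasFDerivAt_prodMk_right t x)
    have : Ψ (F₁ (t, x)) = (F₁ (t, x)).comp inrE := by
      ext ξ; simp [hΨ_def]
    rw [this]
    exact h1
  have hAfderiv : ∀ t ∈ Set.Ioo (-ε) ε, ∀ x ∈ interior U,
      fderiv ℝ (γ t) x = Ψ (F₁ (t, x)) := fun t ht x hx => (hcomp t ht x hx).fderiv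
  -- Part (b)
  set Af : ℝ → (E n →L[ℝ] E n) := fun t => Ψ (F₁ (t, 0)) with hAf_def
  have hAf' : ∀ t ∈ Set.Ioo (-ε) ε, HasDerivAt Af 0 t := by
    intro t ht
    have hm := hmem t ht
    have hcurve : HasDerivAt (fun s : ℝ => ((s, (0 : E n)) : ℝ × E n)) ((1 : ℝ), (0 : E n)) t :=
      (hasDerivAt_id t).prodMk (hasDerivAt_const t 0)
    have h1 : HasDerivAt (fun s => F₁ (s, 0)) (F₂ (t, 0) (1, 0)) t :=
      (hd2 _ hm).comp_hasDerivAt t hcurve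
    have h2 : HasDerivAt Af (Ψ (F₂ (t, 0) (1, 0))) t :=
      Ψ.hasFDerivAt.comp_hasDerivAt t h1
    have hz : Ψ (F₂ (t, 0) (1, 0)) = 0 := by
      -- the derivative of G at (t,0) vanishes since F (t,0) = 0
      have hF0 : F (t, 0) = 0 := ha t ht
      have hdG0 := hdG _ hm
      rw [hF0] at hdG0
      have hGz : HasFDerivAt G (0 : (ℝ × E n) →L[ℝ] E n) (t, 0) := by
        have : (Qc (0 : E n)).comp (F₁ (t, 0)) + (Qc.comp (F₁ (t, 0))).flip 0
            = (0 : (ℝ × E n) →L[ℝ] E n) := by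
          refine ContinuousLinearMap.ext fun v => ?_
          simp
        rwa [this] at hdG0
      have huni : (F₂ (t, 0)).flip ((1 : ℝ), (0 : E n)) = 0 := (hGder _ hm).unique hGz
      refine ContinuousLinearMap.ext fun ξ => ?_
      rw [hΨap]
      have := ContinuousLinearMap.ext_iff.1 huni ((0 : ℝ), ξ)
      simp only [ContinuousLinearMap.flip_apply, ContinuousLinearMap.zero_apply] at this ⊢
      rw [hsym2 _ hm]
      exact this
    rwa [hz] at h2
  have hAconst : ∀ t ∈ Set.Ioo (-ε) ε, Af t = Af 0 := fun t ht =>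
    eq_of_hasDerivAt_zero hAf' ht hIoo0
  have hA0 : Af 0 = ContinuousLinearMap.id ℝ (E n) := by
    have h1 : fderiv ℝ (γ 0) 0 = Af 0 := hAfderiv 0 hIoo0 0 h0V
    have h2 : γ 0 =ᶠ[nhds (0 : E n)] (fun x => x) :=
      Filter.eventually_of_mem hU (fun x hx => hinit x hx)
    rw [← h1, h2.fderiv_eq, fderiv_id']
  have hb : ∀ t ∈ Set.Ioo (-ε) ε, fderiv ℝ (γ t) 0 = ContinuousLinearMap.id ℝ (E n) := by
    intro t ht
    rw [hAfderiv t ht 0 h0V]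
    rw [show Ψ (F₁ (t, 0)) = Af t from rfl, hAconst t ht, hA0]
  have hA : ∀ t ∈ Set.Ioo (-ε) ε, ∀ ξ : E n, F₁ (t, 0) (0, ξ) = ξ := by
    intro t ht ξ
    have h1 := ContinuousLinearMap.ext_iff.1 (hAconst t ht) ξ
    rw [hA0] at h1
    rw [← hΨap]
    simpa using h1
  -- Part (c)
  have hc : ∀ t ∈ Set.Ioo (-ε) ε, ∀ ξ η : E n,
      iteratedFDeriv ℝ 2 (γ t) 0 ![ξ, η] = (2 * t) • Q ξ η := by
    intro t ht ξ η
    set bf : ℝ → E n := fun s => F₂ (s, 0) (0, ξ) (0, η) with hbf_def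
    -- relating bf to the iterated derivative
    have hiter : ∀ s ∈ Set.Ioo (-ε) ε,
        fderiv ℝ (fderiv ℝ (γ s)) 0 ξ η = bf s := by
      intro s hs
      have hm := hmem s hs
      have he : (fun x => fderiv ℝ (γ s) x) =ᶠ[nhds (0 : E n)]
          (fun x => Ψ (F₁ (s, x))) :=
        Filter.eventually_of_mem (hVopen.mem_nhds h0V) (fun x hx => hAfderiv s hs x hx)
      rw [he.fderiv_eq]
      have h1 : HasFDerivAt (fun x : E n => F₁ (s, x)) ((F₂ (s, 0)).comp inrE) 0 :=
        (hd2 _ hm).comp 0 (hasFDerivAt_prodMk_right s 0)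
      have h2 : HasFDerivAt (fun x : E n => Ψ (F₁ (s, x)))
          (Ψ.comp ((F₂ (s, 0)).comp inrE)) 0 := Ψ.hasFDerivAt.comp 0 h1
      rw [h2.fderiv]
      simp [hΨ_def, hinrE_def, hbf_def]
    -- bf vanishes at 0
    have hbf0 : bf 0 = 0 := by
      rw [← hiter 0 hIoo0]
      have h2 : γ 0 =ᶠ[nhds (0 : E n)] (fun x => x) :=
        Filter.eventually_of_mem hU (fun x hx => hinit x hx)
      have h3 : (fun x => fderiv ℝ (γ 0) x) =ᶠ[nhds (0 : E n)]
          (fun _ => ContinuousLinearMap.id ℝ (E n)) := by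
        filter_upwards [Filter.EventuallyEq.fderiv (𝕜 := ℝ) h2] with x hx
        rw [hx, fderiv_id']
      rw [Filter.EventuallyEq.fderiv_eq (𝕜 := ℝ) h3]
      simp
    -- derivative of bf
    set w : E n := Qc ξ η + Qc η ξ with hw_def
    have hbf' : ∀ s ∈ Set.Ioo (-ε) ε, HasDerivAt bf w s := by
      intro s hs
      have hm := hmem s hs
      have hcurve : HasDerivAt (fun r : ℝ => ((r, (0 : E n)) : ℝ × E n)) ((1 : ℝ), (0 : E n)) s :=
        (hasDerivAt_id s).prodMk (hasDerivAt_const s 0)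
      have h1 :=
        HasFDerivAt.comp_hasDerivAt (l := F₂) (f := fun r : ℝ => ((r, (0 : E n)) : ℝ × E n)) s (hd3 _ hm) hcurve
      have h2a : HasDerivAt (fun r => F₂ (r, 0) (0, ξ)) (F₃ (s, 0) (1, 0) (0, ξ)) s := by
        have := (ContinuousLinearMap.apply ℝ ((ℝ × E n) →L[ℝ] E n)
          (((0 : ℝ), ξ) : ℝ × E n)).hasFDerivAt.comp_hasDerivAt s h1
        exact this
      have h2 : HasDerivAt bf (F₃ (s, 0) (1, 0) (0, ξ) (0, η)) s := by
        have := (ContinuousLinearMap.apply ℝ (E n)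
          (((0 : ℝ), η) : ℝ × E n)).hasFDerivAt.comp_hasDerivAt s h2a
        exact this
      -- now compute the third derivative value
      have key : F₃ (s, 0) (1, 0) (0, ξ) (0, η) = w := by
        have e1 : F₃ (s, 0) ((1 : ℝ), (0 : E n)) ((0 : ℝ), ξ) ((0 : ℝ), η)
            = F₃ (s, 0) (0, ξ) (1, 0) (0, η) := by
          rw [hsym3 _ hm]
        have e2 : F₃ (s, 0) ((0 : ℝ), ξ) ((1 : ℝ), (0 : E n)) ((0 : ℝ), η)
            = F₃ (s, 0) (0, ξ) (0, η) (1, 0) := hswap23 _ hm _ _ _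
        -- identify q ↦ F₂ q (0,η) (1,0) with the derivative of G in direction (0,η)
        have hg1 : ∀ q ∈ S, F₂ q ((0 : ℝ), η) ((1 : ℝ), (0 : E n))
            = Qc (F q) (F₁ q (0, η)) + Qc (F₁ q (0, η)) (F q) := by
          intro q hq
          have huni := (hGder q hq).unique (hdG q hq)
          have := ContinuousLinearMap.ext_iff.1 huni ((0 : ℝ), η)
          simpa using this
        -- the function q ↦ Qc (F q) (m q) + Qc (m q) (F q) and its derivative at (s,0)
        have hm' : HasFDerivAt (fun q => F₁ q ((0 : ℝ), η)) ((F₂ (s, 0)).flip (0, η)) (s, 0) :=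
          heval1 _ hm _
        have hT1 : HasFDerivAt (fun q => Qc (F q) (F₁ q ((0 : ℝ), η)))
            ((Qc (F (s, 0))).comp ((F₂ (s, 0)).flip (0, η))
              + (Qc.comp (F₁ (s, 0))).flip (F₁ (s, 0) (0, η))) (s, 0) :=
          (Qc.hasFDerivAt.comp _ (hd1 _ hm)).clm_apply hm'
        have hT2 : HasFDerivAt (fun q => Qc (F₁ q ((0 : ℝ), η)) (F q))
            ((Qc (F₁ (s, 0) (0, η))).comp (F₁ (s, 0))
              + (Qc.comp ((F₂ (s, 0)).flip (0, η))).flip (F (s, 0))) (s, 0) :=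
          (Qc.hasFDerivAt.comp _ hm').clm_apply (hd1 _ hm)
        have hsum := hT1.add hT2
        have hEq2 : (fun q => Qc (F q) (F₁ q ((0 : ℝ), η)) + Qc (F₁ q ((0 : ℝ), η)) (F q))
            =ᶠ[nhds ((s, (0 : E n)) : ℝ × E n)]
            (fun q => F₂ q ((0 : ℝ), η) ((1 : ℝ), (0 : E n))) :=
          Filter.eventually_of_mem (hS.mem_nhds hm) (fun q hq => (hg1 q hq).symm)
        have hder2 : HasFDerivAt (fun q => F₂ q ((0 : ℝ), η) ((1 : ℝ), (0 : E n)))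
            ((Qc (F (s, 0))).comp ((F₂ (s, 0)).flip (0, η))
              + (Qc.comp (F₁ (s, 0))).flip (F₁ (s, 0) (0, η))
              + ((Qc (F₁ (s, 0) (0, η))).comp (F₁ (s, 0))
              + (Qc.comp ((F₂ (s, 0)).flip (0, η))).flip (F (s, 0)))) (s, 0) :=
          hsum.congr_of_eventuallyEq hEq2.symm
        have huni2 := (heval2 _ hm ((0 : ℝ), η) ((1 : ℝ), (0 : E n))).unique hder2
        have happ := ContinuousLinearMap.ext_iff.1 huni2 ((0 : ℝ), ξ)
        have hF0 : F ((s : ℝ), (0 : E n)) = 0 := ha s hs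
        rw [e1, e2]
        simp only [ContinuousLinearMap.flip_apply, ContinuousLinearMap.add_apply,
          ContinuousLinearMap.coe_comp', Function.comp_apply] at happ
        rw [happ, hF0, hA s hs ξ, hA s hs η, hw_def]
        simp
      rwa [key] at h2
    -- integrate: bf t = t • w
    have hconst : ∀ s ∈ Set.Ioo (-ε) ε,
        HasDerivAt (fun r => bf r - r • w) 0 s := by
      intro s hs
      have h1 : HasDerivAt (fun r : ℝ => r • w) w s := by
        simpa using (hasDerivAt_id s).smul_const w
      have h2 := (hbf' s hs).sub h1
      rw [sub_self] at h2
      exact h2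
    have : bf t - t • w = bf 0 - (0 : ℝ) • w :=
      eq_of_hasDerivAt_zero hconst ht hIoo0
    rw [hbf0] at this
    have hbft : bf t = t • w := by
      rw [sub_eq_iff_eq_add] at this
      simpa using this
    -- conclude
    rw [iteratedFDeriv_two_apply]
    simp only [Matrix.cons_val_zero, Matrix.cons_val_one, Matrix.head_cons]
    rw [hiter t ht, hbft, hw_def, hQc, hQc, hQsymm η ξ]
    rw [← two_smul ℝ (Q ξ η), smul_smul, mul_comm]
  exact fun t ht => ⟨ha t ht, hb t ht, hc t ht⟩

end
end
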